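/- arXiv:1512.01414 — 3 statements merged into one kernel-verified Lean document; each statement's English description precedes it below -/
import Mathlib

section
/- Let φ : 𝔻 → 𝔻 be a holomorphic self-map of the unit disc, extending holomorphically to a neighborhood of 1, with φ(0) = 0 and φ(1) = 1. Set δ = φ'(1) (which is real and positive). Then for all t ∈ (-1, 1), Re φ(t) ≥ ((δ+1)t - (δ-1))/((δ+1) - (δ-1)t). -/
open Metric Complex Filter Set
open scoped Topology

local notation "conj'" => (starRingEnd ℂ)

lemma minda_normSq_identity (a z : ℂ) :
    Complex.normSq (1 - conj' a * z) - Complex.normSq (z - a)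
      = (1 - Complex.normSq a) * (1 - Complex.normSq z) := by
  simp only [Complex.normSq_apply, Complex.sub_re, Complex.sub_im, Complex.mul_re,
    Complex.mul_im, Complex.one_re, Complex.one_im, Complex.conj_re, Complex.conj_im]
  ring

lemma minda_denom_ne_zero {a z : ℂ} (ha : ‖a‖ < 1) (hz : ‖z‖ < 1) :
    1 - conj' a * z ≠ 0 := by
  intro h
  rw [sub_eq_zero] at h
  have h1 : ‖conj' a * z‖ = 1 := by rw [← h]; simp
  rw [norm_mul, Complex.norm_conj] at h1
  nlinarith [norm_nonneg a, norm_nonneg z]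

/-- The Möbius transformation of the disc sending `a` to `0`. -/
noncomputable def mindaMob (a z : ℂ) : ℂ := (z - a) / (1 - conj' a * z)

lemma minda_normSq_lt_one {z : ℂ} (h : ‖z‖ < 1) : Complex.normSq z < 1 := by
  rw [← Complex.sq_norm]; nlinarith [norm_nonneg z]

lemma minda_abs_lt_one {z : ℂ} (h : Complex.normSq z < 1) : ‖z‖ < 1 := by
  nlinarith [norm_nonneg z, Complex.sq_norm z]

lemma mindaMob_abs_lt {a z : ℂ} (ha : ‖a‖ < 1) (hz : ‖z‖ < 1) :
    ‖mindaMob a z‖ < 1 := by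
  apply minda_abs_lt_one
  rw [mindaMob, Complex.normSq_div]
  have hd : Complex.normSq (1 - conj' a * z) ≠ 0 := by
    simpa [Complex.normSq_eq_zero] using minda_denom_ne_zero ha hz
  have hident := minda_normSq_identity a z
  have h1 : (0:ℝ) < (1 - Complex.normSq a) * (1 - Complex.normSq z) := by
    have := minda_normSq_lt_one ha; have := minda_normSq_lt_one hz
    nlinarith
  have hdp : 0 < Complex.normSq (1 - conj' a * z) :=
    lt_of_le_of_ne (Complex.normSq_nonneg _) (Ne.symm hd)
  rw [div_lt_one hdp]
  linarith

lemma mindaMob_differentiableOn {a : ℂ} (ha : ‖a‖ < 1) :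
    DifferentiableOn ℂ (mindaMob a) (ball 0 1) := by
  apply DifferentiableOn.div
  · exact (differentiable_id.sub_const a).differentiableOn
  · exact ((differentiable_const (1:ℂ)).sub ((differentiable_const _).mul differentiable_id)).differentiableOn
  · intro z hz
    exact minda_denom_ne_zero ha (by simpa using mem_ball_zero_iff.1 hz)

lemma mindaMob_mob {a z : ℂ} (ha : ‖a‖ < 1) (hz : ‖z‖ < 1) :
    mindaMob (-a) (mindaMob a z) = z := by
  have hd : 1 - conj' a * z ≠ 0 := minda_denom_ne_zero ha hz
  have hK : 1 - conj' a * a ≠ 0 := by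
    rw [mul_comm, Complex.mul_conj, sub_ne_zero]
    intro h
    have h1 := minda_normSq_lt_one ha
    rw [Complex.ext_iff] at h
    simp at h
    linarith
  have num : mindaMob a z + a = z * (1 - conj' a * a) / (1 - conj' a * z) := by
    rw [mindaMob, div_add' _ _ _ hd]; congr 1; ring
  have den : 1 + conj' a * mindaMob a z = (1 - conj' a * a) / (1 - conj' a * z) := by
    rw [mindaMob, mul_div_assoc', add_div' _ _ _ hd]; congr 1; ring
  conv_lhs => rw [mindaMob]
  rw [map_neg, sub_neg_eq_add, neg_mul, sub_neg_eq_add, num, den]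
  field_simp
  have hd' : 1 - z * conj' a ≠ 0 := by rwa [mul_comm] at hd
  exact mul_div_cancel_right₀ z hd'

lemma minda_schwarz_pick {φ : ℂ → ℂ} (hφ : DifferentiableOn ℂ φ (ball 0 1))
    (hmap : ∀ z ∈ ball (0:ℂ) 1, φ z ∈ ball (0:ℂ) 1)
    {a z : ℂ} (ha : ‖a‖ < 1) (hz : ‖z‖ < 1) :
    (1 - Complex.normSq a) * (1 - Complex.normSq z) * Complex.normSq (1 - conj' (φ a) * φ z)
      ≤ (1 - Complex.normSq (φ a)) * (1 - Complex.normSq (φ z))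
          * Complex.normSq (1 - conj' a * z) := by
  have hmem : ∀ w : ℂ, w ∈ ball (0:ℂ) 1 ↔ ‖w‖ < 1 := by
    intro w; rw [mem_ball_zero_iff]
  have hφa : ‖φ a‖ < 1 := (hmem _).1 (hmap a ((hmem _).2 ha))
  have hφz : ‖φ z‖ < 1 := (hmem _).1 (hmap z ((hmem _).2 hz))
  have hna : ‖-a‖ < 1 := by simpa using ha
  set g : ℂ → ℂ := fun w => mindaMob (φ a) (φ (mindaMob (-a) w)) with hg_def
  have maps1 : MapsTo (mindaMob (-a)) (ball (0:ℂ) 1) (ball (0:ℂ) 1) := fun w hw =>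
    (hmem _).2 (mindaMob_abs_lt hna ((hmem _).1 hw))
  have maps2 : MapsTo φ (ball (0:ℂ) 1) (ball (0:ℂ) 1) := fun w hw => hmap w hw
  have hg : DifferentiableOn ℂ g (ball 0 1) :=
    ((mindaMob_differentiableOn hφa).comp (hφ.comp (mindaMob_differentiableOn hna) maps1)
      (maps2.comp maps1))
  have gmaps : MapsTo g (ball (0:ℂ) 1) (ball (0:ℂ) 1) := fun w hw =>
    (hmem _).2 (mindaMob_abs_lt hφa ((hmem _).1 (hmap _ (maps1 hw))))
  have g0 : g 0 = 0 := by
    have h1 : mindaMob (-a) 0 = a := by simp [mindaMob]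
    simp [hg_def, h1, mindaMob]
  have hu : ‖mindaMob a z‖ < 1 := mindaMob_abs_lt ha hz
  have key : ‖g (mindaMob a z)‖ ≤ ‖mindaMob a z‖ :=
    Complex.norm_le_norm_of_mapsTo_ball hg (fun w hw => ball_subset_closedBall (gmaps hw)) g0 hu
  have hgz : g (mindaMob a z) = mindaMob (φ a) (φ z) := by
    rw [hg_def]; simp only []; rw [mindaMob_mob ha hz]
  rw [hgz] at key
  have hn : Complex.normSq (mindaMob (φ a) (φ z)) ≤ Complex.normSq (mindaMob a z) := by
    rw [← Complex.sq_norm, ← Complex.sq_norm]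
    exact pow_le_pow_left₀ (norm_nonneg _) key 2
  have hN1 : 0 < Complex.normSq (1 - conj' a * z) := by
    have := minda_denom_ne_zero ha hz
    exact lt_of_le_of_ne (Complex.normSq_nonneg _)
      (Ne.symm (by simpa [Complex.normSq_eq_zero] using this))
  have hN2 : 0 < Complex.normSq (1 - conj' (φ a) * φ z) := by
    have := minda_denom_ne_zero hφa hφz
    exact lt_of_le_of_ne (Complex.normSq_nonneg _)
      (Ne.symm (by simpa [Complex.normSq_eq_zero] using this))
  rw [mindaMob, mindaMob, Complex.normSq_div, Complex.normSq_div] at hn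
  have hcross := (div_le_div_iff₀ hN2 hN1).1 hn
  have h1 := minda_normSq_identity a z
  have h2 := minda_normSq_identity (φ a) (φ z)
  nlinarith [hcross, h1, h2]

set_option maxHeartbeats 1000000 in
/-- Minda's theorem: for a holomorphic self-map φ of the unit disc, extending
holomorphically to a neighborhood of 1, with φ(0) = 0 and φ(1) = 1, the boundary
derivative δ = φ'(1) is real and positive and
Re φ(t) ≥ ((δ+1)t - (δ-1))/((δ+1) - (δ-1)t) for all t ∈ (-1,1). -/
theorem minda_radial_estimate (φ : ℂ → ℂ) (U : Set ℂ) (hU : IsOpen U)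
    (h1U : (1 : ℂ) ∈ U)
    (hφ : DifferentiableOn ℂ φ (Metric.ball 0 1 ∪ U))
    (hmap : ∀ z ∈ Metric.ball (0 : ℂ) 1, φ z ∈ Metric.ball (0 : ℂ) 1)
    (h0 : φ 0 = 0) (hfix : φ 1 = 1) :
    (deriv φ 1).im = 0 ∧ 0 < (deriv φ 1).re ∧
      ∀ t : ℝ, t ∈ Set.Ioo (-1 : ℝ) 1 →
        (((deriv φ 1).re + 1) * t - ((deriv φ 1).re - 1)) /
            (((deriv φ 1).re + 1) - ((deriv φ 1).re - 1) * t) ≤ (φ t).re := by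
  have hopen : IsOpen (Metric.ball (0:ℂ) 1 ∪ U) := Metric.isOpen_ball.union hU
  have hb : DifferentiableOn ℂ φ (ball 0 1) := hφ.mono subset_union_left
  have hd1 : DifferentiableAt ℂ φ 1 := hφ.differentiableAt (hopen.mem_nhds (Or.inr h1U))
  set d : ℂ := deriv φ 1 with hd_def
  have hder : HasDerivAt φ d 1 := hd1.hasDerivAt
  have hreal : HasDerivAt (fun r : ℝ => φ r) d 1 := by
    have h : HasDerivAt φ d ((1:ℝ):ℂ) := by rwa [Complex.ofReal_one]
    exact h.comp_ofReal
  set l : Filter ℝ := 𝓝[<] (1:ℝ) with hl_def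
  have hIoo : Ioo (0:ℝ) 1 ∈ l := Ioo_mem_nhdsLT_of_mem (by constructor <;> norm_num)
  have hψ1 : φ ((1:ℝ):ℂ) = 1 := by rw [Complex.ofReal_one, hfix]
  have hre : HasDerivAt (fun r : ℝ => (φ r).re) d.re 1 :=
    Complex.reCLM.hasFDerivAt.comp_hasDerivAt 1 hreal
  have him : HasDerivAt (fun r : ℝ => (φ r).im) d.im 1 :=
    Complex.imCLM.hasFDerivAt.comp_hasDerivAt 1 hreal
  have hg : HasDerivAt (fun r : ℝ => Complex.normSq (φ r)) (2 * d.re) 1 := by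
    have h := (hre.mul hre).add (him.mul him)
    simp only [← Complex.normSq_apply, hψ1, Complex.one_re, Complex.one_im, mul_zero, zero_mul,
      add_zero, mul_one, one_mul] at h
    exact (h.congr_deriv (by ring)).congr_of_eventuallyEq
      (Filter.Eventually.of_forall fun r => by simp [Complex.normSq_apply])
  have hlne : l ≤ 𝓝[≠] (1:ℝ) := nhdsWithin_mono _ (fun x hx => ne_of_lt hx)
  have hslopeg : Tendsto (slope (fun r : ℝ => Complex.normSq (φ r)) 1) l (𝓝 (2 * d.re)) :=
    (hasDerivAt_iff_tendsto_slope.1 hg).mono_left hlne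
  have hinv : Tendsto (fun r : ℝ => (1 + r)⁻¹) l (𝓝 ((1+1):ℝ)⁻¹) := by
    have hc : ContinuousAt (fun r : ℝ => (1 + r)⁻¹) 1 :=
      (continuousAt_const.add continuousAt_id).inv₀ (by norm_num)
    exact hc.tendsto.mono_left nhdsWithin_le_nhds
  have hB : Tendsto (fun r : ℝ => (1 - Complex.normSq (φ r)) / (1 - r^2)) l (𝓝 d.re) := by
    have h := hslopeg.mul hinv
    have e : (2 * d.re) * ((1+1):ℝ)⁻¹ = d.re := by ring
    rw [e] at h
    apply h.congr'
    filter_upwards [hIoo] with r hr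
    have hr1 : r - 1 ≠ 0 := by intro h'; nlinarith [hr.2]
    have hr2 : 1 + r ≠ 0 := by intro h'; nlinarith [hr.1]
    have hr3 : 1 - r^2 ≠ 0 := by intro h'; nlinarith [hr.1, hr.2]
    rw [slope_def_field]
    have hg1 : Complex.normSq (φ ((1:ℝ):ℂ)) = 1 := by rw [hψ1]; simp
    rw [hg1]
    field_simp
    ring
  have hll : l ≤ 𝓝 (1:ℝ) := by rw [hl_def]; exact nhdsWithin_le_nhds
  have hψtend : Tendsto (fun r : ℝ => φ r) l (𝓝 1) := by
    have h : Tendsto (fun r : ℝ => φ r) (𝓝 1) (𝓝 (φ ((1:ℝ):ℂ))) :=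
      hreal.continuousAt.tendsto
    rw [hψ1] at h
    exact h.mono_left hll
  have hmemball : ∀ w : ℂ, w ∈ ball (0:ℂ) 1 ↔ ‖w‖ < 1 := by
    intro w; rw [mem_ball_zero_iff]
  -- Julia's inequality
  have julia : ∀ z : ℂ, ‖z‖ < 1 →
      (1 - Complex.normSq z) * Complex.normSq (1 - φ z)
        ≤ d.re * ((1 - Complex.normSq (φ z)) * Complex.normSq (1 - z)) := by
    intro z hz
    have hφz : ‖φ z‖ < 1 := (hmemball _).1 (hmap z ((hmemball _).2 hz))
    have hev : ∀ᶠ (r : ℝ) in l,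
        (1 - Complex.normSq z) * Complex.normSq (1 - conj' (φ (r:ℂ)) * φ z)
          ≤ ((1 - Complex.normSq (φ (r:ℂ))) / (1 - r^2))
            * ((1 - Complex.normSq (φ z)) * Complex.normSq (1 - (r:ℂ) * z)) := by
      filter_upwards [hIoo] with r hr
      have har : ‖(r:ℂ)‖ < 1 := by
        rw [Complex.norm_real, Real.norm_eq_abs, abs_lt]; exact ⟨by linarith [hr.1], hr.2⟩
      have hsp := minda_schwarz_pick hb hmap har hz
      rw [Complex.conj_ofReal, Complex.normSq_ofReal] at hsp
      have hr2 : 0 < 1 - r^2 := by nlinarith [hr.1, hr.2]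
      rw [div_mul_eq_mul_div, le_div_iff₀ hr2]
      nlinarith [hsp]
    have h1 : Tendsto (fun r : ℝ =>
        (1 - Complex.normSq z) * Complex.normSq (1 - conj' (φ (r:ℂ)) * φ z)) l
        (𝓝 ((1 - Complex.normSq z) * Complex.normSq (1 - φ z))) := by
      have hc : Continuous fun w : ℂ =>
          (1 - Complex.normSq z) * Complex.normSq (1 - conj' w * φ z) := by
        apply continuous_const.mul
        exact Complex.continuous_normSq.comp
          (continuous_const.sub (Complex.continuous_conj.mul continuous_const))
      have h2 := (hc.tendsto 1).comp hψtend
      simpa [Function.comp_def] using h2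
    have h2 : Tendsto (fun r : ℝ =>
        ((1 - Complex.normSq (φ (r:ℂ))) / (1 - r^2))
          * ((1 - Complex.normSq (φ z)) * Complex.normSq (1 - (r:ℂ) * z))) l
        (𝓝 (d.re * ((1 - Complex.normSq (φ z)) * Complex.normSq (1 - z)))) := by
      apply hB.mul
      have hc : Continuous fun r : ℝ =>
          (1 - Complex.normSq (φ z)) * Complex.normSq (1 - (r:ℂ) * z) := by
        apply continuous_const.mul
        exact Complex.continuous_normSq.comp
          (continuous_const.sub (Complex.continuous_ofReal.mul continuous_const))
      have h3 := (hc.tendsto 1).mono_left hll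
      simpa using h3
    exact le_of_tendsto_of_tendsto h1 h2 hev
  -- slope of φ along reals
  have hslopeφ : Tendsto (slope (fun r : ℝ => φ r) 1) l (𝓝 d) :=
    (hasDerivAt_iff_tendsto_slope.1 hreal).mono_left hlne
  have habsφ : ∀ r : ℝ, r ∈ Ioo (0:ℝ) 1 → ‖φ r‖ ≤ r := by
    intro r hr
    have har : ‖(r:ℂ)‖ < 1 := by
      rw [Complex.norm_real, Real.norm_eq_abs, abs_lt]; exact ⟨by linarith [hr.1], hr.2⟩
    have := Complex.norm_le_norm_of_mapsTo_ball hb (fun w hw => ball_subset_closedBall (hmap w hw)) h0 har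
    rwa [Complex.norm_real, Real.norm_eq_abs, abs_of_pos hr.1] at this
  have hδ1 : 1 ≤ d.re := by
    have hretend : Tendsto (fun r : ℝ => (slope (fun r : ℝ => φ r) 1 r).re) l (𝓝 d.re) :=
      (Complex.continuous_re.tendsto d).comp hslopeφ
    apply ge_of_tendsto hretend
    filter_upwards [hIoo] with r hr
    have h1 : slope (fun r : ℝ => φ r) 1 r = (r - 1)⁻¹ • (φ r - 1) := by
      rw [slope_def_module, hψ1]
    rw [h1]
    have h2 : (φ (r:ℂ)).re ≤ r := le_trans (Complex.re_le_norm _) (habsφ r hr)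
    have h3 : r - 1 < 0 := by linarith [hr.2]
    have h4 : ((r - 1)⁻¹ • ((φ (r:ℂ)) - 1)).re = ((φ (r:ℂ)).re - 1) * (r - 1)⁻¹ := by
      rw [Complex.smul_re]
      simp [Complex.sub_re]
      ring
    rw [h4, ← div_eq_mul_inv, le_div_iff_of_neg h3]
    linarith
  -- A-limit: normSq of slope
  have hA : Tendsto (fun t : ℝ => Complex.normSq (1 - φ t) / (1 - t)^2) l
      (𝓝 (Complex.normSq d)) := by
    have h := (Complex.continuous_normSq.tendsto d).comp hslopeφ
    apply h.congr'
    filter_upwards [hIoo] with r hr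
    show Complex.normSq (slope (fun r : ℝ => φ r) 1 r) = _
    rw [slope_def_module, hψ1, Complex.real_smul, Complex.normSq_mul, Complex.normSq_ofReal]
    have h5 : Complex.normSq (φ (r:ℂ) - 1) = Complex.normSq (1 - φ r) := by
      rw [show φ (r:ℂ) - 1 = -(1 - φ (r:ℂ)) by ring, Complex.normSq_neg]
    have hr1 : r - 1 ≠ 0 := by intro h'; nlinarith [hr.2]
    have hr4 : 1 - r ≠ 0 := by intro h'; nlinarith [hr.2]
    rw [h5, eq_div_iff (pow_ne_zero 2 hr4)]
    have e : ((1:ℝ)-r)^2 = (r-1)*(r-1) := by ring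
    rw [e, show (r-1)⁻¹ * (r-1)⁻¹ * Complex.normSq (1 - φ (r:ℂ)) * ((r-1)*(r-1))
        = ((r-1)⁻¹*(r-1))*((r-1)⁻¹*(r-1))*Complex.normSq (1 - φ (r:ℂ)) by ring,
      inv_mul_cancel₀ hr1]
    ring
  have him0 : d.im = 0 := by
    have hev : ∀ᶠ (t : ℝ) in l, Complex.normSq (1 - φ (t:ℂ)) / (1 - t)^2
        ≤ d.re * ((1 - Complex.normSq (φ (t:ℂ))) / (1 - t^2)) := by
      filter_upwards [hIoo] with t ht
      have hat : ‖(t:ℂ)‖ < 1 := by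
        rw [Complex.norm_real, Real.norm_eq_abs, abs_lt]; exact ⟨by linarith [ht.1], ht.2⟩
      have hj := julia (t:ℂ) hat
      rw [Complex.normSq_ofReal] at hj
      have hcast : (1:ℂ) - (t:ℂ) = ((1 - t : ℝ):ℂ) := by push_cast; ring
      rw [hcast, Complex.normSq_ofReal] at hj
      have hp1 : (0:ℝ) < (1 - t)^2 := by nlinarith [ht.2]
      have hp2 : (0:ℝ) < 1 - t^2 := by nlinarith [ht.1, ht.2]
      rw [← mul_div_assoc, div_le_div_iff₀ hp1 hp2]
      nlinarith [hj]
    have hlim := le_of_tendsto_of_tendsto hA (tendsto_const_nhds.mul hB) hev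
    have hns := Complex.normSq_apply d
    have h6 : d.im * d.im = 0 :=
      le_antisymm (by nlinarith [hlim, hns]) (mul_self_nonneg _)
    exact mul_self_eq_zero.1 h6
  refine ⟨him0, by linarith, ?_⟩
  intro t ht
  have hat : ‖(t:ℂ)‖ < 1 := by
    rw [Complex.norm_real, Real.norm_eq_abs, abs_lt]; exact ⟨ht.1, ht.2⟩
  have hφt : ‖φ t‖ < 1 := (hmemball _).1 (hmap _ ((hmemball _).2 hat))
  have hj := julia (t:ℂ) hat
  rw [Complex.normSq_ofReal] at hj
  have hcast : (1:ℂ) - (t:ℂ) = ((1 - t : ℝ):ℂ) := by push_cast; ring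
  rw [hcast, Complex.normSq_ofReal] at hj
  set u : ℝ := (φ (t:ℂ)).re with hu_def
  set w : ℝ := (φ (t:ℂ)).im with hw_def
  have hexp : Complex.normSq (1 - φ (t:ℂ)) = (1-u)*(1-u) + w*w := by
    rw [Complex.normSq_apply]
    simp [Complex.sub_re, Complex.sub_im, hu_def, hw_def]
  have hs : Complex.normSq (φ (t:ℂ)) = u*u + w*w := Complex.normSq_apply _
  have hs1 : u*u + w*w < 1 := by rw [← hs]; exact minda_normSq_lt_one hφt
  rw [hexp, hs] at hj
  have h1mt : (0:ℝ) < 1 - t := by linarith [ht.2]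
  have h1pt : (0:ℝ) < 1 + t := by linarith [ht.1]
  have hu1 : -1 < u := by nlinarith [mul_self_nonneg w]
  have hδ0 : (0:ℝ) ≤ d.re - 1 := by linarith
  have hD : 0 < (d.re + 1) - (d.re - 1) * t := by nlinarith [mul_nonneg hδ0 h1mt.le]
  rw [div_le_iff₀ hD]
  have e0 : (1+t)*((1-u)*(1-u)+w*w) ≤ d.re*(1 - (u*u+w*w))*(1-t) := by
    nlinarith [hj, h1mt]
  have e2 : (1+t)*((1-u)*(1-u)+w*w)*(1+u) ≤ d.re*(1-(u*u+w*w))*(1-t)*(1+u) :=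
    mul_le_mul_of_nonneg_right e0 (by linarith)
  have e3 : (1-u)*(1-(u*u+w*w))*(1+t) ≤ (1+t)*((1-u)*(1-u)+w*w)*(1+u) := by
    nlinarith [mul_nonneg h1pt.le (mul_self_nonneg w)]
  have e4 : (1-u)*(1-(u*u+w*w))*(1+t) ≤ d.re*(1-(u*u+w*w))*(1-t)*(1+u) := le_trans e3 e2
  have hs1' : (0:ℝ) < 1 - (u*u+w*w) := by linarith
  have e5 : (1-u)*(1+t) ≤ d.re*(1-t)*(1+u) := by
    have e4' : ((1-u)*(1+t)) * (1-(u*u+w*w)) ≤ (d.re*(1-t)*(1+u)) * (1-(u*u+w*w)) := by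
      nlinarith [e4]
    exact le_of_mul_le_mul_right e4' hs1'
  nlinarith [e5]
end

section
/- Let f be a holomorphic self-map of the unit disc 𝔻 ⊂ ℂ, extending holomorphically to a neighborhood of the boundary point 1, with f(1) = 1. Then f'(1) is a positive real number and f'(1) ≥ 2 / Re((1 - f(0)² + f'(0))/(1 - f(0))²). -/
open Complex Metric Set Filter Topology

noncomputable def mob (a z : ℂ) : ℂ := (a - z) / (1 - (starRingEnd ℂ) a * z)

lemma abs_lt_one {z : ℂ} (hz : z ∈ ball (0:ℂ) 1) : ‖z‖ < 1 := by
  rwa [mem_ball_zero_iff] at hz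

lemma den_ne {a z : ℂ} (ha : a ∈ ball (0:ℂ) 1) (hz : z ∈ ball (0:ℂ) 1) :
    1 - (starRingEnd ℂ) a * z ≠ 0 := by
  have ha := abs_lt_one ha; have hz := abs_lt_one hz
  intro h
  have h2 : (starRingEnd ℂ) a * z = 1 := by linear_combination -h
  have h1 : ‖(starRingEnd ℂ) a * z‖ < 1 := by
    rw [norm_mul, Complex.norm_conj]
    nlinarith [norm_nonneg a, norm_nonneg z]
  rw [h2] at h1; simp at h1

lemma one_sub_normSq_pos {z : ℂ} (hz : z ∈ ball (0:ℂ) 1) : 0 < 1 - normSq z := by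
  have hz := abs_lt_one hz
  have := Complex.sq_norm z
  nlinarith [norm_nonneg z]

lemma normSq_key (a z : ℂ) :
    normSq (1 - (starRingEnd ℂ) a * z) - normSq (a - z)
      = (1 - normSq a) * (1 - normSq z) := by
  simp [Complex.normSq_apply, Complex.sub_re, Complex.sub_im, Complex.mul_re, Complex.mul_im]
  ring

lemma normSq_mob {a z : ℂ} (ha : a ∈ ball (0:ℂ) 1) (hz : z ∈ ball (0:ℂ) 1) :
    1 - normSq (mob a z)
      = (1 - normSq a) * (1 - normSq z) / normSq (1 - (starRingEnd ℂ) a * z) := by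
  have hd' : 0 < normSq (1 - (starRingEnd ℂ) a * z) := normSq_pos.2 (den_ne ha hz)
  rw [mob, map_div₀ normSq, ← normSq_key a z]
  rw [sub_div, div_self hd'.ne']

lemma mob_mem {a z : ℂ} (ha : a ∈ ball (0:ℂ) 1) (hz : z ∈ ball (0:ℂ) 1) :
    mob a z ∈ ball (0:ℂ) 1 := by
  have h := normSq_mob ha hz
  have hd' : 0 < normSq (1 - (starRingEnd ℂ) a * z) := normSq_pos.2 (den_ne ha hz)
  have hpos : 0 < 1 - normSq (mob a z) := by
    rw [h]
    exact div_pos (mul_pos (one_sub_normSq_pos ha) (one_sub_normSq_pos hz)) hd'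
  rw [mem_ball_zero_iff, ← Real.sqrt_one, Complex.norm_def,
    Real.sqrt_lt_sqrt_iff (normSq_nonneg _)]
  linarith

lemma mob_invol {a z : ℂ} (ha : a ∈ ball (0:ℂ) 1) (hz : z ∈ ball (0:ℂ) 1) :
    mob a (mob a z) = z := by
  have hd := den_ne ha hz
  have h1 : (1:ℂ) - (normSq a : ℂ) ≠ 0 := by
    have : ((1 - normSq a : ℝ) : ℂ) ≠ 0 :=
      Complex.ofReal_ne_zero.2 (one_sub_normSq_pos ha).ne'
    push_cast at this; exact this
  have e1 : a - mob a z = z * (1 - (normSq a : ℂ)) / (1 - (starRingEnd ℂ) a * z) := by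
    rw [mob, eq_div_iff hd, sub_mul, div_mul_cancel₀ _ hd]
    linear_combination -z * Complex.mul_conj a
  have e2 : 1 - (starRingEnd ℂ) a * mob a z
      = (1 - (normSq a : ℂ)) / (1 - (starRingEnd ℂ) a * z) := by
    rw [mob, eq_div_iff hd, sub_mul, mul_assoc, div_mul_cancel₀ _ hd]
    linear_combination -Complex.mul_conj a
  rw [mob, e1, e2, div_div_div_cancel_right₀]
  · exact mul_div_cancel_right₀ z h1
  · exact hd

lemma mob_diffOn {a : ℂ} (ha : a ∈ ball (0:ℂ) 1) :
    DifferentiableOn ℂ (mob a) (ball 0 1) := fun z hz =>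
  (((differentiable_const a).differentiableAt.sub differentiableAt_id).div
    ((differentiable_const (1:ℂ)).differentiableAt.sub
      ((differentiable_const _).differentiableAt.mul differentiableAt_id))
    (den_ne ha hz)).differentiableWithinAt

/-- Schwarz–Pick lemma. -/
lemma schwarz_pick {f : ℂ → ℂ} (hd : DifferentiableOn ℂ f (ball 0 1))
    (hm : MapsTo f (ball (0:ℂ) 1) (ball (0:ℂ) 1)) {w z : ℂ}
    (hw : w ∈ ball (0:ℂ) 1) (hz : z ∈ ball (0:ℂ) 1) :
    ‖mob (f w) (f z)‖ ≤ ‖mob w z‖ := by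
  set g : ℂ → ℂ := fun u => mob (f w) (f (mob w u)) with hg
  have hfw : f w ∈ ball (0:ℂ) 1 := hm hw
  have hgd : DifferentiableOn ℂ g (ball 0 1) := by
    intro u hu
    have h1 : DifferentiableWithinAt ℂ (mob w) (ball 0 1) u := mob_diffOn hw u hu
    have h2 : DifferentiableWithinAt ℂ (fun u => f (mob w u)) (ball 0 1) u :=
      (hd (mob w u) (mob_mem hw hu)).comp u h1 (fun x hx => mob_mem hw hx)
    exact ((mob_diffOn hfw (f (mob w u)) (hm (mob_mem hw hu))).comp u h2
      (fun x hx => hm (mob_mem hw hx)))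
  have hgm : MapsTo g (ball (0:ℂ) 1) (ball (0:ℂ) 1) :=
    fun u hu => mob_mem hfw (hm (mob_mem hw hu))
  have hg0 : g 0 = 0 := by
    have : mob w 0 = w := by simp [mob]
    simp [hg, this, mob]
  have := Complex.norm_le_norm_of_mapsTo_ball hgd (hgm.mono_right ball_subset_closedBall) hg0
    (z := mob w z) (by rw [← mem_ball_zero_iff]; exact mob_mem hw hz)
  have h2 : g (mob w z) = mob (f w) (f (mob w (mob w z))) := rfl
  rw [h2, mob_invol hw hz] at this
  exact this

/-- Schwarz–Pick in normSq form. -/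
lemma schwarz_pick' {f : ℂ → ℂ} (hd : DifferentiableOn ℂ f (ball 0 1))
    (hm : MapsTo f (ball (0:ℂ) 1) (ball (0:ℂ) 1)) {w z : ℂ}
    (hw : w ∈ ball (0:ℂ) 1) (hz : z ∈ ball (0:ℂ) 1) :
    (1 - normSq w) * (1 - normSq z) / normSq (1 - (starRingEnd ℂ) w * z)
      ≤ (1 - normSq (f w)) * (1 - normSq (f z))
          / normSq (1 - (starRingEnd ℂ) (f w) * f z) := by
  have h := schwarz_pick hd hm hw hz
  have h2 : normSq (mob (f w) (f z)) ≤ normSq (mob w z) := by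
    rw [← Complex.sq_norm, ← Complex.sq_norm]
    exact pow_le_pow_left₀ (norm_nonneg _) h 2
  have e1 := normSq_mob hw hz
  have e2 := normSq_mob (hm hw) (hm hz)
  linarith

set_option maxHeartbeats 2000000 in
lemma herglotz {G : ℂ → ℂ} (hd : DifferentiableOn ℂ G (ball 0 1))
    (hre : ∀ z ∈ ball (0:ℂ) 1, 0 ≤ (G z).re) : ‖deriv G 0‖ ≤ 2 * (G 0).re := by
  have h0 : (0:ℂ) ∈ ball (0:ℂ) 1 := mem_ball_self one_pos
  refine le_of_forall_pos_le_add fun ε hε => ?_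
  set δ : ℝ := ε / 2 with hδdef
  have hδ : 0 < δ := half_pos hε
  set D : ℂ → ℂ := fun z => G z + (starRingEnd ℂ) (G 0) + (2 * δ : ℝ) with hD
  have hDre : ∀ z ∈ ball (0:ℂ) 1, 0 < (D z).re := by
    intro z hz
    have := hre z hz; have := hre 0 h0
    simp only [hD, Complex.add_re, Complex.conj_re, Complex.ofReal_re]
    linarith
  have hDne : ∀ z ∈ ball (0:ℂ) 1, D z ≠ 0 := by
    intro z hz h
    have := hDre z hz; rw [h] at this; simp at this
  have hkey : ∀ z : ℂ, normSq (D z) - normSq (G z - G 0)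
      = 4 * ((G z).re + δ) * ((G 0).re + δ) := by
    intro z
    simp only [hD, Complex.normSq_apply, Complex.add_re, Complex.add_im, Complex.sub_re,
      Complex.sub_im, Complex.conj_re, Complex.conj_im, Complex.ofReal_re, Complex.ofReal_im]
    ring
  set h : ℂ → ℂ := fun z => (G z - G 0) / D z with hh
  have hdh : DifferentiableOn ℂ h (ball 0 1) := by
    intro z hz
    exact ((hd z hz).sub (differentiableWithinAt_const _)).div
      (((hd z hz).add (differentiableWithinAt_const _)).add (differentiableWithinAt_const _))
      (hDne z hz)
  have hmaps : MapsTo h (ball (0:ℂ) 1) (ball (0:ℂ) 1) := by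
    intro z hz
    have hns : 0 < normSq (D z) := normSq_pos.2 (hDne z hz)
    rw [mem_ball_zero_iff, ← Real.sqrt_one, Complex.norm_def,
      Real.sqrt_lt_sqrt_iff (normSq_nonneg _), hh]
    rw [map_div₀ normSq, div_lt_one hns]
    have := hkey z
    have h1 := hre z hz; have h2 := hre 0 h0
    nlinarith
  have hball : h 0 = 0 := by simp [hh]
  have hsch : ‖deriv h 0‖ ≤ 1 := by
    have := Complex.norm_deriv_le_div_of_mapsTo_ball hdh (by rw [hball]; exact hmaps.mono_right ball_subset_closedBall) one_pos
    simpa using this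
  have hG0 : HasDerivAt G (deriv G 0) 0 :=
    (hd.differentiableAt (isOpen_ball.mem_nhds h0)).hasDerivAt
  have hDd : HasDerivAt D (deriv G 0) 0 := (hG0.add_const _).add_const _
  have hNd : HasDerivAt (fun z => G z - G 0) (deriv G 0) 0 := hG0.sub_const _
  have hhd : HasDerivAt h ((deriv G 0 * D 0 - (G 0 - G 0) * deriv G 0) / D 0 ^ 2) 0 :=
    hNd.div hDd (hDne 0 h0)
  have hder : deriv h 0 = deriv G 0 / D 0 := by
    rw [hhd.deriv]
    rw [sub_self, zero_mul, sub_zero, pow_two, mul_comm (D 0) (D 0),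
      ← div_div, mul_div_assoc, div_self (hDne 0 h0), mul_one]
  rw [hder] at hsch
  have hD0 : D 0 = ((2 * (G 0).re + 2 * δ : ℝ) : ℂ) := by
    simp only [hD]
    rw [Complex.add_conj]
    push_cast; ring
  have hnorm : ‖D 0‖ = 2 * (G 0).re + 2 * δ := by
    rw [hD0, Complex.norm_real, Real.norm_eq_abs,
      _root_.abs_of_nonneg (by have := hre 0 h0; linarith)]
  rw [norm_div, div_le_one (by rw [hnorm]; have := hre 0 h0; linarith)] at hsch
  rw [hnorm] at hsch
  linarith [hsch]

set_option maxHeartbeats 2000000 in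
/-- Sharp boundary Schwarz lemma for holomorphic self-maps of the disc with a boundary
fixed point at 1: f'(1) is real and positive and
f'(1) ≥ 2 / Re((1 - f(0)² + f'(0))/(1 - f(0))²). -/
theorem sharp_boundary_schwarz (f : ℂ → ℂ) (U : Set ℂ) (hU : IsOpen U)
    (h1U : (1 : ℂ) ∈ U)
    (hf : DifferentiableOn ℂ f (Metric.ball 0 1 ∪ U))
    (hmap : ∀ z ∈ Metric.ball (0 : ℂ) 1, f z ∈ Metric.ball (0 : ℂ) 1)
    (hfix : f 1 = 1) :
    (deriv f 1).im = 0 ∧ 0 < (deriv f 1).re ∧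
      2 / (((1 - f 0 ^ 2 + deriv f 0) / (1 - f 0) ^ 2).re) ≤ (deriv f 1).re := by
  have hop : IsOpen (ball (0:ℂ) 1 ∪ U) := isOpen_ball.union hU
  have hfb : DifferentiableOn ℂ f (ball 0 1) := hf.mono subset_union_left
  have hm : MapsTo f (ball (0:ℂ) 1) (ball (0:ℂ) 1) := hmap
  have h0b : (0:ℂ) ∈ ball (0:ℂ) 1 := mem_ball_self one_pos
  have ha : f 0 ∈ ball (0:ℂ) 1 := hmap 0 h0b
  have hd1 : DifferentiableAt ℂ f 1 := hf.differentiableAt (hop.mem_nhds (Or.inr h1U))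
  set β := deriv f 1 with hβdef
  have hder : HasDerivAt f β 1 := hd1.hasDerivAt
  set l : Filter ℝ := 𝓝[<] (1:ℝ) with hldef
  have hcoe' : Tendsto (fun r : ℝ => (r:ℂ)) l (𝓝 (1:ℂ)) := by
    have : Tendsto (fun r : ℝ => (r:ℂ)) (𝓝 (1:ℝ)) (𝓝 (1:ℂ)) := by
      simpa using Complex.continuous_ofReal.tendsto 1
    exact this.mono_left nhdsWithin_le_nhds
  have hcoe : Tendsto (fun r : ℝ => (r:ℂ)) l (𝓝[≠] (1:ℂ)) := by
    apply tendsto_nhdsWithin_of_tendsto_nhds_of_eventually_within _ hcoe'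
    filter_upwards [eventually_mem_nhdsWithin] with r (hr : r < 1)
    simp only [Set.mem_compl_iff, Set.mem_singleton_iff]
    intro h
    rw [show (1:ℂ) = ((1:ℝ):ℂ) by norm_num, Complex.ofReal_inj] at h
    exact hr.ne h
  set gq : ℝ → ℂ := fun r => (1 - f r) / (1 - (r:ℂ)) with hgq
  have hslope : Tendsto gq l (𝓝 β) := by
    have h1 := hasDerivAt_iff_tendsto_slope.mp hder
    have h2 := h1.comp hcoe
    apply h2.congr
    intro r
    show slope f 1 (r:ℂ) = gq r
    rw [slope_def_field, hfix, hgq]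
    rw [← neg_div_neg_eq]
    ring_nf
  have hev : ∀ᶠ r : ℝ in l, r ∈ Ioo (-1:ℝ) 1 :=
    Ioo_mem_nhdsLT_of_mem (by constructor <;> norm_num)
  have hrball : ∀ r : ℝ, r ∈ Ioo (-1:ℝ) 1 → (r:ℂ) ∈ ball (0:ℂ) 1 := by
    intro r hr
    rw [mem_ball_zero_iff, Complex.norm_real, Real.norm_eq_abs, abs_lt]
    exact ⟨hr.1, hr.2⟩
  have hsub : ∀ r : ℝ, r ∈ Ioo (-1:ℝ) 1 → (1:ℂ) - (r:ℂ) ≠ 0 := by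
    intro r hr h
    have : ((1 - r : ℝ) : ℂ) = 0 := by push_cast; linear_combination h
    rw [Complex.ofReal_eq_zero] at this
    linarith [hr.2]
  have hfr : ∀ r : ℝ, r ∈ Ioo (-1:ℝ) 1 → f r = 1 - (1 - (r:ℂ)) * gq r := by
    intro r hr
    rw [hgq]
    have hne := hsub r hr
    field_simp
    ring
  have hnormSqfr : ∀ r : ℝ, r ∈ Ioo (-1:ℝ) 1 →
      normSq (f r) = 1 - 2 * (1 - r) * (gq r).re + (1 - r)^2 * normSq (gq r) := by
    intro r hr
    rw [hfr r hr]
    have : (1:ℂ) - (r:ℂ) = ((1 - r : ℝ):ℂ) := by push_cast; ring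
    rw [this]
    simp only [Complex.normSq_apply, Complex.sub_re, Complex.sub_im, Complex.mul_re,
      Complex.mul_im, Complex.ofReal_re, Complex.ofReal_im, Complex.one_re, Complex.one_im]
    ring
  -- limit (1 - |f r|²)/(1 - r²) → β.re
  have hA : Tendsto (fun r : ℝ => (1 - normSq (f r)) / (1 - r^2)) l (𝓝 β.re) := by
    have hre : Tendsto (fun r : ℝ => (gq r).re) l (𝓝 β.re) :=
      (Complex.continuous_re.tendsto β).comp hslope
    have hns : Tendsto (fun r : ℝ => normSq (gq r)) l (𝓝 (normSq β)) :=
      (Complex.continuous_normSq.tendsto β).comp hslope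
    have h1r : Tendsto (fun r : ℝ => (1:ℝ) - r) l (𝓝 0) := by
      have : Tendsto (fun r : ℝ => (1:ℝ) - r) (𝓝 1) (𝓝 (1 - 1)) :=
        (continuous_const.sub continuous_id).tendsto 1
      simpa using this.mono_left nhdsWithin_le_nhds
    have h2r : Tendsto (fun r : ℝ => (1:ℝ) + r) l (𝓝 2) := by
      have : Tendsto (fun r : ℝ => (1:ℝ) + r) (𝓝 1) (𝓝 (1 + 1)) :=
        (continuous_const.add continuous_id).tendsto 1
      have h2 := this.mono_left (nhdsWithin_le_nhds (s := Iio (1:ℝ)))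
      norm_num at h2
      exact h2
    have hlim : Tendsto (fun r : ℝ => (2 * (gq r).re - (1 - r) * normSq (gq r)) / (1 + r)) l
        (𝓝 ((2 * β.re - 0 * normSq β) / 2)) :=
      (((hre.const_mul 2).sub (h1r.mul hns)).div h2r (by norm_num))
    have : (2 * β.re - 0 * normSq β) / 2 = β.re := by ring
    rw [this] at hlim
    apply hlim.congr'
    filter_upwards [hev] with r hr
    have h1 : (1:ℝ) - r ≠ 0 := by have := hr.2; intro h; linarith
    have h2 : (1:ℝ) + r ≠ 0 := by have := hr.1; intro h; linarith
    rw [hnormSqfr r hr, show (1:ℝ) - r^2 = (1-r)*(1+r) by ring,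
      div_eq_div_iff h2 (mul_ne_zero h1 h2)]
    ring
  -- positivity of β.re
  have hnsa : 0 < 1 - normSq (f 0) := one_sub_normSq_pos ha
  have habs1 : ‖f 0‖ < 1 := abs_lt_one ha
  have hApos : 0 < β.re := by
    set m : ℝ := (1 - ‖f 0‖)^2 / (1 - normSq (f 0)) with hmdef
    have hmpos : 0 < m := div_pos (pow_pos (by linarith) 2) hnsa
    have hbound : ∀ᶠ r : ℝ in l, m ≤ (1 - normSq (f r)) / (1 - r^2) := by
      filter_upwards [hev] with r hr
      have hrb := hrball r hr
      have hsp := schwarz_pick' hfb hm hrb h0b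
      have hfrb : f r ∈ ball (0:ℂ) 1 := hm hrb
      have hq : 0 < normSq (1 - (starRingEnd ℂ) (f ↑r) * f 0) :=
        normSq_pos.2 (den_ne hfrb ha)
      have hqge : (1 - ‖f 0‖)^2 ≤ normSq (1 - (starRingEnd ℂ) (f ↑r) * f 0) := by
        have h5 : ‖(starRingEnd ℂ) (f ↑r) * f 0‖ ≤ ‖f 0‖ := by
          rw [norm_mul, Complex.norm_conj]
          nlinarith [norm_nonneg (f ↑r), norm_nonneg (f 0),
            (abs_lt_one hfrb).le]
        have h6 : 1 - ‖f 0‖ ≤ ‖1 - (starRingEnd ℂ) (f ↑r) * f 0‖ := by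
          calc 1 - ‖f 0‖ ≤ 1 - ‖(starRingEnd ℂ) (f ↑r) * f 0‖ := by
                linarith
            _ ≤ ‖1 - (starRingEnd ℂ) (f ↑r) * f 0‖ := by
                have := norm_sub_norm_le (1:ℂ) ((starRingEnd ℂ) (f ↑r) * f 0)
                simpa using this
        have h7 : 0 ≤ 1 - ‖f 0‖ := by linarith
        calc (1 - ‖f 0‖)^2 ≤ (‖1 - (starRingEnd ℂ) (f ↑r) * f 0‖)^2 :=
              by nlinarith [norm_nonneg (1 - (starRingEnd ℂ) (f ↑r) * f 0)]
          _ = normSq (1 - (starRingEnd ℂ) (f ↑r) * f 0) := Complex.sq_norm _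
      -- simplify LHS of hsp
      have hlhs : (1 - normSq ((r:ℝ):ℂ)) * (1 - normSq (0:ℂ))
          / normSq (1 - (starRingEnd ℂ) ((r:ℝ):ℂ) * (0:ℂ)) = 1 - r^2 := by
        simp [Complex.normSq_ofReal]
        ring
      rw [hlhs] at hsp
      have hr2 : 0 < 1 - r^2 := by nlinarith [hr.1, hr.2]
      have hfz : 0 < 1 - normSq (f 0) := hnsa
      have h2 : (1 - r^2) * normSq (1 - (starRingEnd ℂ) (f ↑r) * f 0)
          ≤ (1 - normSq (f ↑r)) * (1 - normSq (f 0)) := by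
        exact (le_div_iff₀ hq).mp hsp
      rw [hmdef, div_le_div_iff₀ hnsa hr2]
      nlinarith [h2, hqge, hr2.le, hq.le]
    exact lt_of_lt_of_le hmpos (ge_of_tendsto hA hbound)
  -- f ∘ coe tends to 1
  have hfc : Tendsto (fun r : ℝ => f r) l (𝓝 (1:ℂ)) := by
    have h1 : Tendsto f (𝓝 (1:ℂ)) (𝓝 (f 1)) := hd1.continuousAt
    rw [hfix] at h1
    exact h1.comp hcoe'
  have hfz1 : ∀ z ∈ ball (0:ℂ) 1, normSq (1 - z) ≠ 0 := by
    intro z hz h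
    rw [normSq_eq_zero, sub_eq_zero] at h
    have := abs_lt_one hz
    rw [← h] at this
    simp at this
  -- Julia's inequality
  have julia : ∀ z ∈ ball (0:ℂ) 1,
      (1 - normSq z) / normSq (1 - z)
        ≤ β.re * ((1 - normSq (f z)) / normSq (1 - f z)) := by
    intro z hz
    have hnsz : normSq (1 - z) ≠ 0 := hfz1 z hz
    have hnsfz : normSq (1 - f z) ≠ 0 := hfz1 (f z) (hm hz)
    -- limits
    have lim1 : Tendsto (fun r : ℝ => (1 - normSq z) / normSq (1 - (r:ℂ) * z)) l
        (𝓝 ((1 - normSq z) / normSq (1 - z))) := by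
      have hden : Tendsto (fun r : ℝ => normSq (1 - (r:ℂ) * z)) l (𝓝 (normSq (1 - z))) := by
        have hc : Continuous (fun w : ℂ => normSq (1 - w * z)) :=
          Complex.continuous_normSq.comp (continuous_const.sub (continuous_id.mul continuous_const))
        have := (hc.tendsto 1).comp hcoe'
        simpa only [Function.comp_def, one_mul] using this
      exact tendsto_const_nhds.div hden hnsz
    have lim2 : Tendsto (fun r : ℝ =>
        ((1 - normSq (f r)) / (1 - r^2))
          * ((1 - normSq (f z)) / normSq (1 - (starRingEnd ℂ) (f r) * f z))) l
        (𝓝 (β.re * ((1 - normSq (f z)) / normSq (1 - f z)))) := by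
      have hden : Tendsto (fun r : ℝ => normSq (1 - (starRingEnd ℂ) (f r) * f z)) l
          (𝓝 (normSq (1 - f z))) := by
        have hc : Continuous (fun w : ℂ => normSq (1 - (starRingEnd ℂ) w * f z)) :=
          Complex.continuous_normSq.comp
            (continuous_const.sub ((Complex.continuous_conj).mul continuous_const))
        have := (hc.tendsto 1).comp hfc
        simpa only [Function.comp_def, map_one, one_mul] using this
      exact hA.mul (tendsto_const_nhds.div hden hnsfz)
    refine le_of_tendsto_of_tendsto lim1 lim2 ?_
    filter_upwards [hev] with r hr
    have hrb := hrball r hr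
    have hsp := schwarz_pick' hfb hm hrb hz
    have hr2 : 0 < 1 - r^2 := by nlinarith [hr.1, hr.2]
    have e0 : normSq ((r:ℝ):ℂ) = r^2 := by rw [Complex.normSq_ofReal]; ring
    have e1 : (starRingEnd ℂ) ((r:ℝ):ℂ) = ((r:ℝ):ℂ) := Complex.conj_ofReal r
    rw [e1, e0] at hsp
    have hDnee : normSq (1 - (r:ℂ) * z) ≠ 0 := by
      intro h
      rw [normSq_eq_zero, sub_eq_zero] at h
      have h2 : ‖(r:ℂ) * z‖ < 1 := by
        rw [norm_mul, Complex.norm_real, Real.norm_eq_abs]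
        have hza := abs_lt_one hz
        have : |r| < 1 := abs_lt.2 ⟨hr.1, hr.2⟩
        nlinarith [norm_nonneg z, abs_nonneg r]
      rw [← h] at h2; simp at h2
    have goal1 : (1 - normSq z) / normSq (1 - (r:ℂ) * z)
        = ((1 - r^2) * (1 - normSq z) / normSq (1 - (r:ℂ) * z)) / (1 - r^2) := by
      field_simp
    have goal2 : ((1 - normSq (f r)) / (1 - r^2))
          * ((1 - normSq (f z)) / normSq (1 - (starRingEnd ℂ) (f r) * f z))
        = ((1 - normSq (f r)) * (1 - normSq (f z))
            / normSq (1 - (starRingEnd ℂ) (f r) * f z)) / (1 - r^2) := by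
      ring
    rw [goal1, goal2]
    gcongr
  -- β is real
  have hβne : β ≠ 0 := by
    intro h
    rw [h] at hApos; simp at hApos
  have hnsβ : 0 < normSq β := normSq_pos.2 hβne
  have him : β.im = 0 := by
    have hnsq : Tendsto (fun r : ℝ => normSq (gq r)) l (𝓝 (normSq β)) :=
      (Complex.continuous_normSq.tendsto β).comp hslope
    have hinv : Tendsto (fun r : ℝ => (normSq (gq r))⁻¹) l (𝓝 ((normSq β)⁻¹)) :=
      hnsq.inv₀ hnsβ.ne'
    have h2r : Tendsto (fun r : ℝ => (1:ℝ) + r) l (𝓝 2) := by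
      have : Tendsto (fun r : ℝ => (1:ℝ) + r) (𝓝 1) (𝓝 (1 + 1)) :=
        (continuous_const.add continuous_id).tendsto 1
      have h2 := this.mono_left (nhdsWithin_le_nhds (s := Iio (1:ℝ)))
      norm_num at h2
      exact h2
    have lim2 : Tendsto (fun r : ℝ =>
        β.re * ((1 - normSq (f r)) / (1 - r^2)) * ((1 + r) * (normSq (gq r))⁻¹)) l
        (𝓝 (β.re * β.re * (2 * (normSq β)⁻¹))) :=
      ((tendsto_const_nhds.mul hA)).mul (h2r.mul hinv)
    have hineq : (2:ℝ) ≤ β.re * β.re * (2 * (normSq β)⁻¹) := by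
      refine le_of_tendsto_of_tendsto h2r lim2 ?_
      filter_upwards [hev] with r hr
      have hrb := hrball r hr
      have hJ := julia _ hrb
      have h1 : (1:ℝ) - r ≠ 0 := by have := hr.2; intro h; linarith
      have h1p : (0:ℝ) < 1 - r := by have := hr.2; linarith
      have h2 : (1:ℝ) + r ≠ 0 := by have := hr.1; intro h; linarith
      have e0 : normSq ((r:ℝ):ℂ) = r^2 := by rw [Complex.normSq_ofReal]; ring
      have e1 : normSq (1 - ((r:ℝ):ℂ)) = (1 - r)^2 := by
        rw [show (1:ℂ) - ((r:ℝ):ℂ) = ((1 - r : ℝ):ℂ) by push_cast; ring,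
          Complex.normSq_ofReal]
        ring
      rw [e0, e1] at hJ
      have hnsfr : normSq (1 - f r) = (1 - r)^2 * normSq (gq r) := by
        rw [show (1:ℂ) - f r = (1 - (r:ℂ)) * gq r by rw [hfr r hr]; ring,
          map_mul normSq, show (1:ℂ) - (r:ℂ) = ((1 - r : ℝ):ℂ) by push_cast; ring,
          Complex.normSq_ofReal]
        ring
      have hnsgq : normSq (gq r) ≠ 0 := by
        intro h
        rw [h, mul_zero] at hnsfr
        exact hfz1 (f r) (hm hrb) hnsfr
      calc (1:ℝ) + r = (1 - r) * ((1 - r^2) / (1 - r)^2) := by field_simp; ring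
        _ ≤ (1 - r) * (β.re * ((1 - normSq (f r)) / normSq (1 - f r))) :=
            mul_le_mul_of_nonneg_left hJ h1p.le
        _ = β.re * ((1 - normSq (f r)) / (1 - r^2)) * ((1 + r) * (normSq (gq r))⁻¹) := by
            rw [hnsfr]
            obtain ⟨q, hq⟩ : ∃ q, normSq (gq r) = q := ⟨_, rfl⟩
            rw [hq] at hnsgq ⊢
            have h12 : (1:ℝ) - r^2 ≠ 0 := by nlinarith [hr.1, hr.2]
            field_simp
            ring
    -- conclude im = 0
    have h4 := mul_le_mul_of_nonneg_left hineq hnsβ.le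
    have h5 : normSq β * (β.re * β.re * (2 * (normSq β)⁻¹)) = β.re * β.re * 2 := by
      field_simp
    have h3 : normSq β ≤ β.re * β.re := by rw [h5] at h4; linarith
    rw [Complex.normSq_apply] at h3
    have h6 : β.im * β.im ≤ 0 := by linarith
    exact mul_self_eq_zero.mp (le_antisymm h6 (mul_self_nonneg β.im))
  -- β is a real constant
  have hβreal : β = ((β.re : ℝ) : ℂ) := Complex.ext (by simp) (by simp [him])
  have hβinv : β⁻¹ = (((β.re)⁻¹ : ℝ) : ℂ) := by
    rw [Complex.ofReal_inv, ← hβreal]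
  have hreT : ∀ u : ℂ, ((1 + u) / (1 - u)).re = (1 - normSq u) / normSq (1 - u) := by
    intro u
    rw [Complex.div_re]
    simp only [Complex.normSq_apply, Complex.add_re, Complex.add_im, Complex.sub_re,
      Complex.sub_im, Complex.one_re, Complex.one_im]
    ring
  set G : ℂ → ℂ := fun z => (1 + f z) / (1 - f z) - β⁻¹ * ((1 + z) / (1 - z)) with hGdef
  have hsubz : ∀ z ∈ ball (0:ℂ) 1, (1:ℂ) - z ≠ 0 := by
    intro z hz h
    rw [sub_eq_zero] at h
    have := abs_lt_one hz; rw [← h] at this; simp at this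
  have hGre : ∀ z ∈ ball (0:ℂ) 1, 0 ≤ (G z).re := by
    intro z hz
    have hj := julia z hz
    have h1 : (G z).re = ((1 + f z)/(1 - f z)).re - (β.re)⁻¹ * ((1 + z)/(1 - z)).re := by
      simp only [hGdef, Complex.sub_re, hβinv, Complex.re_ofReal_mul]
    rw [h1, hreT, hreT, sub_nonneg, inv_mul_le_iff₀ hApos]
    exact hj
  have hGdiff : DifferentiableOn ℂ G (ball 0 1) := by
    intro z hz
    have hfd := hfb z hz
    have h1 : DifferentiableWithinAt ℂ (fun z => (1 + f z)/(1 - f z)) (ball 0 1) z :=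
      ((differentiableWithinAt_const _).add hfd).div
        ((differentiableWithinAt_const _).sub hfd) (hsubz (f z) (hm hz))
    have h2 : DifferentiableWithinAt ℂ (fun z : ℂ => (1 + z)/(1 - z)) (ball 0 1) z :=
      ((differentiableWithinAt_const _).add differentiableWithinAt_id).div
        ((differentiableWithinAt_const _).sub differentiableWithinAt_id) (hsubz z hz)
    exact h1.sub ((differentiableWithinAt_const _).mul h2)
  have hHerg := herglotz hGdiff hGre
  have hf0 : HasDerivAt f (deriv f 0) 0 :=
    (hfb.differentiableAt (isOpen_ball.mem_nhds h0b)).hasDerivAt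
  have hfne0 : (1:ℂ) - f 0 ≠ 0 := hsubz (f 0) ha
  have hT1 : HasDerivAt (fun z => (1 + f z)/(1 - f z))
      ((deriv f 0 * (1 - f 0) - (1 + f 0) * (-deriv f 0)) / (1 - f 0)^2) 0 :=
    (hf0.const_add 1).div (hf0.const_sub 1) hfne0
  have hT2 : HasDerivAt (fun z : ℂ => (1 + z)/(1 - z))
      ((1 * (1 - (0:ℂ)) - (1 + (0:ℂ)) * (-1)) / (1 - (0:ℂ))^2) 0 :=
    ((hasDerivAt_id (0:ℂ)).const_add 1).div ((hasDerivAt_id (0:ℂ)).const_sub 1) (by norm_num)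
  have hGd : HasDerivAt G
      ((deriv f 0 * (1 - f 0) - (1 + f 0) * (-deriv f 0)) / (1 - f 0)^2
        - β⁻¹ * ((1 * (1 - (0:ℂ)) - (1 + (0:ℂ)) * (-1)) / (1 - (0:ℂ))^2)) 0 :=
    hT1.sub (hT2.const_mul β⁻¹)
  have hd0 : deriv G 0 = 2 * deriv f 0 / (1 - f 0)^2 - β⁻¹ * 2 := by
    rw [hGd.deriv]; ring
  have hre_d : (deriv G 0).re = (2 * deriv f 0 / (1 - f 0)^2).re - 2 * (β.re)⁻¹ := by
    rw [hd0, Complex.sub_re]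
    congr 1
    rw [hβinv, show (((β.re)⁻¹:ℝ):ℂ) * 2 = (((2 * (β.re)⁻¹ : ℝ)):ℂ) by push_cast; ring]
    exact Complex.ofReal_re _
  have hG0re : (G 0).re = ((1 + f 0)/(1 - f 0)).re - (β.re)⁻¹ := by
    simp only [hGdef, Complex.sub_re]
    congr 1
    rw [show ((1:ℂ)+0)/((1:ℂ)-0) = 1 by norm_num, mul_one, hβinv]
    exact Complex.ofReal_re _
  have habs : -(deriv G 0).re ≤ 2 * (G 0).re := by
    have h1 : |(deriv G 0).re| ≤ ‖deriv G 0‖ := by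
      exact Complex.abs_re_le_norm _
    have h2 := neg_abs_le ((deriv G 0).re)
    linarith [hHerg]
  have hkey : 4 * (β.re)⁻¹ ≤ 2 * (((1 - f 0^2 + deriv f 0) / (1 - f 0)^2).re) := by
    have hid : (1 + f 0)/(1 - f 0) + deriv f 0 / (1 - f 0)^2
        = (1 - f 0^2 + deriv f 0) / (1 - f 0)^2 := by
      field_simp
      ring
    have hre2 : ((1 + f 0)/(1 - f 0)).re + (deriv f 0 / (1 - f 0)^2).re
        = ((1 - f 0^2 + deriv f 0) / (1 - f 0)^2).re := by
      rw [← Complex.add_re, hid]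
    have h2re : (2 * deriv f 0 / (1 - f 0)^2).re = 2 * (deriv f 0 / (1 - f 0)^2).re := by
      rw [mul_div_assoc, show (2:ℂ) = ((2:ℝ):ℂ) by norm_num, Complex.re_ofReal_mul]
    rw [hre_d, h2re, hG0re] at habs
    linarith [habs, hre2]
  refine ⟨him, hApos, ?_⟩
  have hRpos : 0 < (((1 - f 0 ^ 2 + deriv f 0) / (1 - f 0) ^ 2).re) := by
    have h4 : 0 < 4 * (β.re)⁻¹ := by positivity
    nlinarith [hkey]
  rw [div_le_iff₀ hRpos]
  have h2A : 2 * (β.re)⁻¹ ≤ (((1 - f 0 ^ 2 + deriv f 0) / (1 - f 0) ^ 2).re) := by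
    nlinarith [hkey]
  have hmul := mul_le_mul_of_nonneg_left h2A hApos.le
  have heq : β.re * (2 * (β.re)⁻¹) = 2 := by field_simp
  nlinarith [hmul, heq]
end

section
/- Let f and g be non-identically-vanishing slice regular functions on a symmetric slice domain Ω ⊆ 𝕆. Then (f∗g)^s = f^s g^s = g^s f^s on Ω, where ∗ is the regular product and ^s the symmetrization. -/
noncomputable section

open Quaternion

/-- The octonions, realized via the Cayley–Dickson construction over the quaternions. -/
abbrev Octo := ℍ[ℝ] × ℍ[ℝ]

namespace Octo

/-- Octonion multiplication (Cayley–Dickson): (z₁,z₂)(w₁,w₂) = (z₁w₁ - w̄₂z₂, z₂w̄₁ + w₂z₁). -/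
def mul' (z w : Octo) : Octo :=
  (z.1 * w.1 - star w.2 * z.2, z.2 * star w.1 + w.2 * z.1)

/-- Octonionic conjugation. -/
def conj' (x : Octo) : Octo := (star x.1, -x.2)

/-- The multiplicative unit of the octonions. -/
def one' : Octo := (1, 0)

/-- The embedding of the reals into the octonions. -/
def emb (x : ℝ) : Octo := (algebraMap ℝ ℍ[ℝ] x, 0)

/-- The real part of an octonion. -/
def re' (x : Octo) : ℝ := x.1.re

/-- The imaginary part of an octonion. -/
def im' (x : Octo) : Octo := x - emb (re' x)

/-- The standard Euclidean inner product on 𝕆 ≅ ℝ⁸. -/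
def inner' (x y : Octo) : ℝ := (inner ℝ x.1 y.1 : ℝ) + (inner ℝ x.2 y.2 : ℝ)

/-- The Euclidean norm on the octonions. -/
def norm' (x : Octo) : ℝ := Real.sqrt (inner' x x)

/-- The multiplicative inverse of a nonzero octonion. -/
def inv' (x : Octo) : Octo := (inner' x x)⁻¹ • conj' x

/-- The associator [u,v,w] = (uv)w - u(vw). -/
def assoc' (u v w : Octo) : Octo := mul' (mul' u v) w - mul' u (mul' v w)

/-- n-th power of an octonion. -/
def pow' (x : Octo) : ℕ → Octo
  | 0 => one'
  | n + 1 => mul' x (pow' x n)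

/-- A purely imaginary unit octonion: I ∈ 𝕊 iff I² = -1. -/
def IsImUnit (I : Octo) : Prop := mul' I I = - one'

/-- The point x + yI on the slice ℂ_I. -/
def pt (I : Octo) (p : ℝ × ℝ) : Octo := emb p.1 + p.2 • I

/-- The slice ℂ_I = ℝ ⊕ Iℝ. -/
def sliceSet (I : Octo) : Set Octo := {z | ∃ p : ℝ × ℝ, z = pt I p}

/-- e^{θI} = cos θ + (sin θ) I. -/
def expI (θ : ℝ) (I : Octo) : Octo := emb (Real.cos θ) + Real.sin θ • I

/-- Slice regularity: on every slice ℂ_I the function is holomorphic, i.e. real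
differentiable with ∂f/∂x + I ∂f/∂y = 0. -/
def SliceRegular (Ω : Set Octo) (f : Octo → Octo) : Prop :=
  ∀ I, IsImUnit I → ∀ p : ℝ × ℝ, pt I p ∈ Ω →
    ∃ fx fy : Octo,
      HasFDerivAt (fun q : ℝ × ℝ => f (pt I q))
        ((ContinuousLinearMap.fst ℝ ℝ ℝ).smulRight fx
          + (ContinuousLinearMap.snd ℝ ℝ ℝ).smulRight fy) p
      ∧ fx + mul' I fy = 0

/-- Symmetric slice domain: open, connected, meeting the real axis, with each slice a
domain, and axially symmetric. -/
def SymSliceDomain (Ω : Set Octo) : Prop :=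
  IsOpen Ω ∧ IsConnected Ω ∧ (∃ x : ℝ, emb x ∈ Ω) ∧
  (∀ I, IsImUnit I → IsConnected {p : ℝ × ℝ | pt I p ∈ Ω}) ∧
  (∀ I J, IsImUnit I → IsImUnit J → ∀ p : ℝ × ℝ, pt I p ∈ Ω → pt J p ∈ Ω)

/-- The open unit ball 𝔹 of the octonions. -/
def ball1 : Set Octo := {z | norm' z < 1}

end Octo

namespace Octo

attribute [local simp] Quaternion.re_mul Quaternion.imI_mul Quaternion.imJ_mul
  Quaternion.imK_mul Quaternion.inner_def

lemma octo_ext {x y : Octo} (h1 : x.1 = y.1) (h2 : x.2 = y.2) : x = y :=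
  Prod.ext h1 h2

lemma mul'_add_left (x y z : Octo) : mul' (x + y) z = mul' x z + mul' y z := by
  refine octo_ext ?_ ?_ <;> simp only [mul', Prod.fst_add, Prod.snd_add] <;> noncomm_ring

lemma mul'_add_right (x y z : Octo) : mul' x (y + z) = mul' x y + mul' x z := by
  refine octo_ext ?_ ?_ <;> simp only [mul', Prod.fst_add, Prod.snd_add, star_add] <;> noncomm_ring

lemma mul'_smul_left (r : ℝ) (x z : Octo) : mul' (r • x) z = r • mul' x z := by
  refine octo_ext ?_ ?_ <;>
    simp only [mul', Prod.smul_fst, Prod.smul_snd, smul_mul_assoc,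
      mul_smul_comm, smul_sub, smul_add]

lemma mul'_smul_right (r : ℝ) (x z : Octo) : mul' x (r • z) = r • mul' x z := by
  refine octo_ext ?_ ?_ <;>
    simp only [mul', Prod.smul_fst, Prod.smul_snd, Quaternion.star_smul, smul_mul_assoc,
      mul_smul_comm, smul_sub, smul_add]

lemma mul'_one (x : Octo) : mul' x one' = x := by
  simp [mul', one']

lemma one'_mul (x : Octo) : mul' one' x = x := by
  simp [mul', one']

lemma mul'_neg_right (x z : Octo) : mul' x (-z) = - mul' x z := by
  have := mul'_smul_right (-1) x z; simpa using this

lemma emb_eq (x : ℝ) : emb x = x • one' := by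
  simp only [emb, one']
  exact octo_ext (by simp [Algebra.algebraMap_eq_smul_one]) (by simp)

lemma mul'_emb_right (r : ℝ) (x : Octo) : mul' x (emb r) = r • x := by
  rw [emb_eq, mul'_smul_right, mul'_one]

lemma mul'_emb_left (r : ℝ) (x : Octo) : mul' (emb r) x = r • x := by
  rw [emb_eq, mul'_smul_left, one'_mul]

lemma emb_mul (r s : ℝ) : mul' (emb r) (emb s) = emb (r * s) := by
  rw [mul'_emb_left, emb_eq, emb_eq, smul_smul]

set_option maxHeartbeats 1000000 in
lemma leftAlt (x y : Octo) : mul' x (mul' x y) = mul' (mul' x x) y := by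
  obtain ⟨a, b⟩ := x; obtain ⟨c, d⟩ := y
  simp only [mul']
  exact octo_ext (by ext <;> simp <;> ring) (by ext <;> simp <;> ring)

lemma imUnit_sq {I : Octo} (hI : IsImUnit I) (y : Octo) : mul' I (mul' I y) = -y := by
  have hII : mul' I I = -one' := hI
  rw [leftAlt, hII]
  have : (-one' : Octo) = (-1 : ℝ) • one' := by
    exact octo_ext (by simp [one']) (by simp [one'])
  rw [this, mul'_smul_left, one'_mul]; simp

lemma inner'_comm (x y : Octo) : inner' x y = inner' y x := by
  simp only [inner', Quaternion.inner_def]; simp; ring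

lemma inner'_add_right (a x y : Octo) : inner' a (x + y) = inner' a x + inner' a y := by
  simp only [inner', Quaternion.inner_def, Prod.fst_add, Prod.snd_add]; simp; ring

lemma inner'_smul_right (a : Octo) (r : ℝ) (x : Octo) :
    inner' a (r • x) = r * inner' a x := by
  simp only [inner', Quaternion.inner_def, Prod.smul_fst, Prod.smul_snd]; simp; ring

lemma inner'_neg_right (a x : Octo) : inner' a (-x) = - inner' a x := by
  have := inner'_smul_right a (-1) x; simpa using this

lemma inner'_sub_right (a x y : Octo) : inner' a (x - y) = inner' a x - inner' a y := by
  rw [sub_eq_add_neg, inner'_add_right, inner'_neg_right]; ring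

lemma inner'_self_nonneg (x : Octo) : 0 ≤ inner' x x := by
  have h1 : (0:ℝ) ≤ inner ℝ x.1 x.1 := real_inner_self_nonneg
  have h2 : (0:ℝ) ≤ inner ℝ x.2 x.2 := real_inner_self_nonneg
  simp only [inner']; linarith

lemma inner'_self_eq_zero {x : Octo} (h : inner' x x = 0) : x = 0 := by
  simp only [inner'] at h
  have h1 : (0:ℝ) ≤ inner ℝ x.1 x.1 := real_inner_self_nonneg
  have h2 : (0:ℝ) ≤ inner ℝ x.2 x.2 := real_inner_self_nonneg
  have e1 : (inner ℝ x.1 x.1 : ℝ) = 0 := by linarith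
  have e2 : (inner ℝ x.2 x.2 : ℝ) = 0 := by linarith
  exact octo_ext (inner_self_eq_zero.mp e1) (inner_self_eq_zero.mp e2)

lemma inner'_self_pos {x : Octo} (h : x ≠ 0) : 0 < inner' x x := by
  rcases lt_or_eq_of_le (inner'_self_nonneg x) with h' | h'
  · exact h'
  · exact absurd (inner'_self_eq_zero h'.symm) h

lemma inner'_one'_one' : inner' one' one' = 1 := by simp [inner', Quaternion.inner_def, one']

lemma imUnit_re {I : Octo} (hI : IsImUnit I) : I.1.re = 0 ∧ inner' I I = 1 := by
  obtain ⟨q, v⟩ := I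
  have hI' : mul' (q, v) (q, v) = -one' := hI
  unfold mul' one' at hI'
  rw [Prod.ext_iff] at hI'
  obtain ⟨h1, h2⟩ := hI'
  rw [Quaternion.ext_iff] at h1 h2
  simp only [Quaternion.re_mul, Quaternion.imI_mul, Quaternion.imJ_mul, Quaternion.imK_mul,
    Quaternion.re_sub, Quaternion.imI_sub, Quaternion.imJ_sub, Quaternion.imK_sub,
    Quaternion.re_add, Quaternion.imI_add, Quaternion.imJ_add, Quaternion.imK_add,
    Quaternion.re_star, Quaternion.imI_star, Quaternion.imJ_star, Quaternion.imK_star,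
    Quaternion.re_neg, Quaternion.imI_neg, Quaternion.imJ_neg, Quaternion.imK_neg,
    Quaternion.re_one, Quaternion.imI_one, Quaternion.imJ_one,
    Quaternion.imK_one, Prod.fst_neg, Prod.snd_neg, Quaternion.re_zero,
    Quaternion.imI_zero, Quaternion.imJ_zero, Quaternion.imK_zero,
    neg_zero] at h1 h2
  obtain ⟨e1, e2, e3, e4⟩ := h1
  obtain ⟨f1, f2, f3, f4⟩ := h2
  ring_nf at e1 e2 e3 e4 f1 f2 f3 f4
  have c1 : q.re * q.imI = 0 := by linarith
  have c2 : q.re * q.imJ = 0 := by linarith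
  have c3 : q.re * q.imK = 0 := by linarith
  have c4 : q.re * v.re = 0 := by linarith
  have c5 : q.re * v.imI = 0 := by linarith
  have c6 : q.re * v.imJ = 0 := by linarith
  have c7 : q.re * v.imK = 0 := by linarith
  have hr : q.re = 0 := by
    have key : q.re ^ 2 * (q.re ^ 2 + 1) = (q.re * q.imI)^2 + (q.re * q.imJ)^2
        + (q.re * q.imK)^2 + (q.re*v.re)^2 + (q.re*v.imI)^2 + (q.re*v.imJ)^2
        + (q.re*v.imK)^2 := by nlinarith [e1]
    rw [c1, c2, c3, c4, c5, c6, c7] at key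
    have : q.re ^ 2 = 0 := by nlinarith [sq_nonneg q.re]
    exact pow_eq_zero_iff (n := 2) (by norm_num) |>.mp this
  refine ⟨hr, ?_⟩
  simp only [inner', Quaternion.inner_def]
  simp only [Quaternion.re_mul, Quaternion.re_star, Quaternion.imI_star,
    Quaternion.imJ_star, Quaternion.imK_star]
  nlinarith [e1, hr]

lemma inner'_one'_imUnit {I : Octo} (hI : IsImUnit I) : inner' one' I = 0 := by
  simp [inner', Quaternion.inner_def, one', (imUnit_re hI).1]

lemma pt_eq (I : Octo) (p : ℝ × ℝ) : pt I p = p.1 • one' + p.2 • I := by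
  rw [pt, emb_eq]

lemma mul'_pt_pt {I : Octo} (hI : IsImUnit I) (a b c d : ℝ) :
    mul' (pt I (a, b)) (pt I (c, d)) = pt I (a*c - b*d, a*d + b*c) := by
  have hII : mul' I I = -one' := hI
  simp only [pt_eq, mul'_add_left, mul'_add_right, mul'_smul_left, mul'_smul_right,
    mul'_one, one'_mul, hII]
  module

lemma mul'_conj'_self (z : Octo) : mul' z (conj' z) = emb (inner' z z) := by
  obtain ⟨a, b⟩ := z
  simp only [mul', conj', emb, inner']
  refine octo_ext ?_ (by simp)
  ext <;> simp [-inner_self_eq_norm_sq_to_K] <;> ring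

lemma normMul (x y : Octo) : inner' (mul' x y) (mul' x y) = inner' x x * inner' y y := by
  obtain ⟨a,b⟩ := x; obtain ⟨c,d⟩ := y
  simp only [mul', inner']
  simp [-inner_self_eq_norm_sq_to_K]; ring

lemma pureIm_sq {u : Octo} (h : u.1.re = 0) :
    mul' u u = (-(inner' u u)) • one' := by
  obtain ⟨q, v⟩ := u
  simp only at h
  simp only [mul', inner', one', Prod.smul_mk]
  refine octo_ext ?_ ?_ <;> simp only
  · ext <;> simp [h, -inner_self_eq_norm_sq_to_K] <;> ring
  · ext <;> simp [h, -inner_self_eq_norm_sq_to_K] <;> ring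

lemma im'_re (w : Octo) : (im' w).1.re = 0 := by
  simp [im', emb, re']

def I0 : Octo := ((⟨0,1,0,0⟩ : ℍ[ℝ]), 0)

lemma isImUnit_I0 : IsImUnit I0 := by
  have r0 : I0.1.re = 0 := rfl
  have r1 : I0.1.imI = 1 := rfl
  have r2 : I0.1.imJ = 0 := rfl
  have r3 : I0.1.imK = 0 := rfl
  have r4 : I0.2 = 0 := rfl
  show mul' I0 I0 = - one'
  unfold mul' one'
  rw [r4]
  refine octo_ext ?_ ?_ <;> simp only [Prod.fst_neg, Prod.snd_neg] <;>
    rw [Quaternion.ext_iff] <;> simp [r0, r1, r2, r3]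

lemma isImUnit_normalize {u : Octo} (h1 : u.1.re = 0) (h0 : u ≠ 0) :
    IsImUnit ((Real.sqrt (inner' u u))⁻¹ • u) := by
  have hN : 0 < inner' u u := inner'_self_pos h0
  have hs : Real.sqrt (inner' u u) ≠ 0 := by positivity
  show mul' _ _ = - one'
  rw [mul'_smul_left, mul'_smul_right, pureIm_sq h1, smul_smul, smul_smul]
  rw [show (Real.sqrt (inner' u u))⁻¹ * (Real.sqrt (inner' u u))⁻¹ * -(inner' u u)
    = -((Real.sqrt (inner' u u) * Real.sqrt (inner' u u))⁻¹ * inner' u u) by ring]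
  rw [Real.mul_self_sqrt hN.le, inv_mul_cancel₀ (ne_of_gt hN)]
  refine octo_ext ?_ ?_ <;> simp [one']

lemma emb_add_im' (w : Octo) : emb (re' w) + im' w = w := by
  simp [im']

lemma pt_real (I : Octo) (x : ℝ) : pt I (x, 0) = emb x := by
  simp [pt]

lemma inner'_pt {I : Octo} (hI : IsImUnit I) (a b : ℝ) :
    inner' one' (pt I (a, b)) = a ∧ inner' I (pt I (a, b)) = b := by
  have h1 := inner'_one'_one'
  have h2 := inner'_one'_imUnit hI
  have h3 := (imUnit_re hI).2
  constructor
  · rw [pt_eq]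
    rw [inner'_add_right, inner'_smul_right, inner'_smul_right, h1, h2]; ring
  · rw [pt_eq]
    rw [inner'_add_right, inner'_smul_right, inner'_smul_right, h3,
      inner'_comm I one', h2]; ring

/-- Orthogonal decomposition: if v's component orthogonal to span{1,I} pairs to zero
with v itself, then v lies in the slice. -/
lemma slice_of_orth {I : Octo} (hI : IsImUnit I) (v : Octo)
    (h : inner' (v - inner' one' v • one' - inner' I v • I) v = 0) :
    v = pt I (inner' one' v, inner' I v) := by
  set a := v - inner' one' v • one' - inner' I v • I with ha
  have h1 := inner'_one'_one'
  have h2 := inner'_one'_imUnit hI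
  have h3 := (imUnit_re hI).2
  have hv : v = a + (inner' one' v • one' + inner' I v • I) := by rw [ha]; abel
  have haa : inner' a a = 0 := by
    have expand : inner' a v = inner' a a + inner' one' v * inner' a one'
        + inner' I v * inner' a I := by
      conv_lhs => rw [hv]
      rw [inner'_add_right, inner'_add_right, inner'_smul_right, inner'_smul_right]
      ring
    have hao : inner' a one' = 0 := by
      rw [ha, inner'_comm, inner'_sub_right, inner'_sub_right, inner'_smul_right,
        inner'_smul_right, h1, h2, inner'_comm one' v]
      ring
    have hai : inner' a I = 0 := by
      rw [ha, inner'_comm, inner'_sub_right, inner'_sub_right, inner'_smul_right,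
        inner'_smul_right, h3, inner'_comm I one', h2, inner'_comm I v]
      ring
    rw [expand, hao, hai] at h
    linarith
  have ha0 : a = 0 := inner'_self_eq_zero haa
  conv_lhs => rw [hv]
  rw [ha0, pt_eq]; abel

lemma mul'_comm_pt {I : Octo} (hI : IsImUnit I) (a b c d : ℝ) :
    mul' (pt I (a, b)) (pt I (c, d)) = mul' (pt I (c, d)) (pt I (a, b)) := by
  rw [mul'_pt_pt hI, mul'_pt_pt hI]
  ring_nf


/-! ### Analytic layer -/

def Tfun (a I : Octo) (v : Octo) : ℂ :=
  Complex.mk (inner' a v) (-(inner' a (mul' I v)))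

lemma Tfun_add (a I : Octo) (v w : Octo) :
    Tfun a I (v + w) = Tfun a I v + Tfun a I w := by
  unfold Tfun
  apply Complex.ext <;>
    simp [mul'_add_right, inner'_add_right, Complex.add_re, Complex.add_im] <;> ring

lemma Tfun_smul (a I : Octo) (r : ℝ) (v : Octo) :
    Tfun a I (r • v) = r • Tfun a I v := by
  unfold Tfun
  apply Complex.ext <;>
    simp [mul'_smul_right, inner'_smul_right, Complex.real_smul] <;> ring

def Tlin (a I : Octo) : Octo →ₗ[ℝ] ℂ where
  toFun := Tfun a I
  map_add' := Tfun_add a I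
  map_smul' := Tfun_smul a I

def Tclm (a I : Octo) : Octo →L[ℝ] ℂ :=
  LinearMap.toContinuousLinearMap (Tlin a I)

lemma Tclm_apply (a I v : Octo) : Tclm a I v = Tfun a I v := rfl

lemma holo {Ω : Set Octo} {F : Octo → Octo} (hF : SliceRegular Ω F) {I : Octo}
    (hI : IsImUnit I) (a : Octo) {z : ℂ} (hz : pt I (z.re, z.im) ∈ Ω) :
    DifferentiableAt ℂ (fun w : ℂ => Tfun a I (F (pt I (w.re, w.im)))) z := by
  obtain ⟨fx, fy, hd, hcr⟩ := hF I hI (z.re, z.im) hz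
  set D := (ContinuousLinearMap.fst ℝ ℝ ℝ).smulRight fx
      + (ContinuousLinearMap.snd ℝ ℝ ℝ).smulRight fy with hD
  have hfx : fx = - mul' I fy := by
    have := hcr; linear_combination (norm := module) this
  have key : Tfun a I fy = Complex.I * Tfun a I fx := by
    have hJfx : mul' I fx = fy := by
      rw [hfx, mul'_neg_right, imUnit_sq hI, neg_neg]
    apply Complex.ext
    · rw [Complex.I_mul_re]
      show inner' a fy = -(Tfun a I fx).im
      show inner' a fy = -(-(inner' a (mul' I fx)))
      rw [hJfx, neg_neg]
    · rw [Complex.I_mul_im]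
      show -(inner' a (mul' I fy)) = (Tfun a I fx).re
      show -(inner' a (mul' I fy)) = inner' a fx
      rw [hfx, inner'_neg_right]
  -- real derivative of the composite
  have hρ : HasFDerivAt (fun w : ℂ => ((w.re, w.im) : ℝ × ℝ))
      (Complex.equivRealProdCLM : ℂ →L[ℝ] ℝ × ℝ) z :=
    Complex.equivRealProdCLM.toContinuousLinearMap.hasFDerivAt
  have hcomp1 : HasFDerivAt (fun w : ℂ => F (pt I (w.re, w.im)))
      (D.comp (Complex.equivRealProdCLM : ℂ →L[ℝ] ℝ × ℝ)) z :=
    by have := HasFDerivAt.comp z hd hρ; exact this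
  have hcomp2 : HasFDerivAt (fun w : ℂ => Tfun a I (F (pt I (w.re, w.im))))
      ((Tclm a I).comp (D.comp (Complex.equivRealProdCLM : ℂ →L[ℝ] ℝ × ℝ))) z :=
    HasFDerivAt.comp z ((Tclm a I).hasFDerivAt) hcomp1
  -- the real derivative acts as complex multiplication by c
  set c : ℂ := Tfun a I fx with hc
  have happly : ∀ w : ℂ,
      ((Tclm a I).comp (D.comp (Complex.equivRealProdCLM : ℂ →L[ℝ] ℝ × ℝ))) w
        = w * c := by
    intro w
    have h1 : ((Tclm a I).comp (D.comp (Complex.equivRealProdCLM : ℂ →L[ℝ] ℝ × ℝ))) w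
        = Tclm a I (D (w.re, w.im)) := rfl
    have h2 : D (w.re, w.im) = w.re • fx + w.im • fy := by
      rw [hD]; simp [ContinuousLinearMap.smulRight_apply]
    rw [h1, h2]
    have h3 : Tclm a I (w.re • fx + w.im • fy)
        = w.re • Tfun a I fx + w.im • Tfun a I fy := by
      rw [Tclm_apply, Tfun_add, Tfun_smul, Tfun_smul]
    rw [h3, key, ← hc, Complex.real_smul, Complex.real_smul]
    have : (w.re : ℂ) * c + (w.im : ℂ) * (Complex.I * c) = (w.re + w.im * Complex.I) * c := by
      ring
    rw [this, Complex.re_add_im]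
  have hC : HasFDerivAt (fun w : ℂ => Tfun a I (F (pt I (w.re, w.im))))
      (ContinuousLinearMap.smulRight (1 : ℂ →L[ℂ] ℂ) c) z := by
    rw [hasFDerivAt_iff_isLittleO_nhds_zero] at hcomp2 ⊢
    have : (fun h : ℂ => Tfun a I (F (pt I ((z + h).re, (z + h).im)))
        - Tfun a I (F (pt I (z.re, z.im)))
        - (ContinuousLinearMap.smulRight (1 : ℂ →L[ℂ] ℂ) c) h)
        = (fun h : ℂ => Tfun a I (F (pt I ((z + h).re, (z + h).im)))
        - Tfun a I (F (pt I (z.re, z.im)))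
        - ((Tclm a I).comp (D.comp (Complex.equivRealProdCLM : ℂ →L[ℝ] ℝ × ℝ))) h) := by
      funext w
      rw [happly w]
      simp [ContinuousLinearMap.smulRight_apply, smul_eq_mul]
    rw [this]
    exact hcomp2
  exact hC.differentiableAt

lemma core {Ω : Set Octo} (hΩ : SymSliceDomain Ω) {I : Octo} (hI : IsImUnit I)
    (u : ℂ → ℂ)
    (hdiff : ∀ z : ℂ, pt I (z.re, z.im) ∈ Ω → DifferentiableAt ℂ u z)
    (hreal : ∀ x : ℝ, emb x ∈ Ω → u x = 0)
    {z : ℂ} (hz : pt I (z.re, z.im) ∈ Ω) : u z = 0 := by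
  obtain ⟨hopen, -, ⟨x₀, hx₀⟩, hslice, -⟩ := hΩ
  set S' : Set ℂ := {w : ℂ | pt I (w.re, w.im) ∈ Ω} with hS'
  have hcont : Continuous fun w : ℂ => pt I (w.re, w.im) := by
    simp only [pt_eq]
    exact (Complex.continuous_re.smul continuous_const).add
      (Complex.continuous_im.smul continuous_const)
  have hSopen : IsOpen S' := hopen.preimage hcont
  have hSconn : IsPreconnected S' := by
    have hS := hslice I hI
    have himg : S' = ⇑Complex.equivRealProd.symm '' {p : ℝ × ℝ | pt I p ∈ Ω} := by
      rw [Equiv.image_symm_eq_preimage]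
      rfl
    rw [himg]
    exact hS.isPreconnected.image _
      (Complex.equivRealProdCLM.symm.continuous.continuousOn)
  have hz₀ : ((x₀ : ℂ)) ∈ S' := by
    show pt I ((x₀:ℂ).re, (x₀:ℂ).im) ∈ Ω
    simp only [Complex.ofReal_re, Complex.ofReal_im]
    rwa [pt_real]
  have hfreq : ∃ᶠ w in nhdsWithin (x₀ : ℂ) {(x₀ : ℂ)}ᶜ, u w = 0 := by
    rw [Filter.frequently_iff]
    intro U hU
    rw [Metric.mem_nhdsWithin_iff] at hU
    obtain ⟨ε, hε, hball⟩ := hU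
    obtain ⟨ε₁, hε₁, hball₁⟩ := Metric.isOpen_iff.mp hSopen _ hz₀
    set δ := min ε ε₁ / 2 with hδ
    have hδpos : 0 < δ := by positivity
    have hδlt : δ < min ε ε₁ := by
      have : 0 < min ε ε₁ := lt_min hε hε₁
      rw [hδ]; linarith
    have hnorm : ‖(δ : ℂ)‖ = δ := by
      rw [Complex.norm_real, Real.norm_eq_abs, abs_of_pos hδpos]
    refine ⟨(x₀ : ℂ) + δ, hball ⟨?_, ?_⟩, ?_⟩
    · rw [Metric.mem_ball]
      simp only [dist_eq_norm, add_sub_cancel_left]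
      rw [hnorm]
      exact lt_of_lt_of_le hδlt (min_le_left _ _)
    · simp only [Set.mem_compl_iff, Set.mem_singleton_iff]
      intro hcon
      have : (δ : ℂ) = 0 := by linear_combination hcon
      rw [Complex.ofReal_eq_zero] at this
      linarith
    · have hmem : ((x₀ : ℂ) + δ) ∈ S' := by
        apply hball₁
        rw [Metric.mem_ball]
        simp only [dist_eq_norm, add_sub_cancel_left]
        rw [hnorm]
        exact lt_of_lt_of_le hδlt (min_le_right _ _)
      have hembmem : emb (x₀ + δ) ∈ Ω := by
        have h' : pt I (((x₀ + δ : ℝ) : ℂ).re, ((x₀ + δ : ℝ) : ℂ).im) ∈ Ω := by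
          have := hmem
          simp only [hS', Set.mem_setOf_eq] at this
          rwa [show ((x₀ : ℂ) + δ) = ((x₀ + δ : ℝ) : ℂ) by push_cast; ring] at this
        simpa only [Complex.ofReal_re, Complex.ofReal_im, pt_real] using h'
      have := hreal (x₀ + δ) hembmem
      rw [show ((x₀ : ℂ) + δ) = ((x₀ + δ : ℝ) : ℂ) by push_cast; ring]
      exact this
  have hAnal : AnalyticOnNhd ℂ u S' :=
    DifferentiableOn.analyticOnNhd
      (fun w hw => (hdiff w hw).differentiableWithinAt) hSopen
  have hEq := hAnal.eqOn_zero_of_preconnected_of_frequently_eq_zero hSconn hz₀ hfreq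
  exact hEq hz

lemma proj_orth {I : Octo} (hI : IsImUnit I) (v : Octo) :
    inner' (v - inner' one' v • one' - inner' I v • I) one' = 0 ∧
    inner' (v - inner' one' v • one' - inner' I v • I) I = 0 := by
  have h1 := inner'_one'_one'
  have h2 := inner'_one'_imUnit hI
  have h3 := (imUnit_re hI).2
  constructor
  · rw [inner'_comm, inner'_sub_right, inner'_sub_right, inner'_smul_right,
      inner'_smul_right, h1, h2, inner'_comm one' v]
    ring
  · rw [inner'_comm, inner'_sub_right, inner'_sub_right, inner'_smul_right,
      inner'_smul_right, h3, inner'_comm I one', h2, inner'_comm I v]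
    ring

lemma slicePres {Ω : Set Octo} (hΩ : SymSliceDomain Ω) {I : Octo} (hI : IsImUnit I)
    {F : Octo → Octo} (hF : SliceRegular Ω F)
    (hreal : ∀ x : ℝ, emb x ∈ Ω → ∃ r : ℝ, F (emb x) = emb r)
    {z : ℂ} (hz : pt I (z.re, z.im) ∈ Ω) :
    F (pt I (z.re, z.im)) = pt I (inner' one' (F (pt I (z.re, z.im))),
      inner' I (F (pt I (z.re, z.im)))) := by
  set v := F (pt I (z.re, z.im)) with hv
  set a := v - inner' one' v • one' - inner' I v • I with ha
  obtain ⟨hao, hai⟩ := proj_orth hI v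
  rw [← ha] at hao hai
  apply slice_of_orth hI
  rw [← ha]
  have hker : Tfun a I (F (pt I (z.re, z.im))) = 0 := by
    apply core hΩ hI (fun w => Tfun a I (F (pt I (w.re, w.im))))
      (fun w hw => holo hF hI a hw) ?_ hz
    intro x hx
    obtain ⟨r, hr⟩ := hreal x hx
    have hpt : pt I ((x:ℂ).re, (x:ℂ).im) = emb x := by
      simp only [Complex.ofReal_re, Complex.ofReal_im]; exact pt_real I x
    show Tfun a I (F (pt I ((x:ℂ).re, (x:ℂ).im))) = 0
    rw [hpt, hr]
    have hre : inner' a (emb r) = 0 := by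
      rw [emb_eq, inner'_smul_right, hao, mul_zero]
    have him : inner' a (mul' I (emb r)) = 0 := by
      rw [mul'_emb_right, inner'_smul_right, hai, mul_zero]
    unfold Tfun
    rw [Complex.ext_iff]
    constructor
    · simpa using hre
    · simpa using him
  have hre := congrArg Complex.re hker
  rw [← hv] at hre
  simpa [Tfun] using hre

lemma pt_zero_one {I : Octo} : pt I (0, 1) = I := by
  rw [pt_eq]; simp

lemma Tfun_pt {I : Octo} (hI : IsImUnit I) (a b : ℝ) :
    Tfun one' I (pt I (a, b)) = Complex.mk a b := by
  have hJ : mul' I (pt I (a, b)) = pt I (-b, a) := by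
    have h0 : mul' I (pt I (a, b)) = mul' (pt I (0, 1)) (pt I (a, b)) := by
      rw [pt_zero_one]
    rw [h0, mul'_pt_pt hI]; ring_nf
  unfold Tfun
  rw [hJ, Complex.ext_iff]
  constructor
  · simpa using (inner'_pt hI a b).1
  · rw [(inner'_pt hI (-b) a).1]; ring

lemma Tfun_emb {I : Octo} (hI : IsImUnit I) (r : ℝ) :
    Tfun one' I (emb r) = (r : ℂ) := by
  have : emb r = pt I (r, 0) := (pt_real I r).symm
  rw [this, Tfun_pt hI]
  rw [Complex.ext_iff]
  simp

end Octo

open Octo in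
/-- The symmetrization of a regular product is the (commuting) pointwise product of the
symmetrizations: (f∗g)^s = f^s g^s = g^s f^s.  Here p = f∗g, and fs, gs, ps are the
symmetrizations of f, g, p, each characterized as the slice regular function agreeing on
the reals with the corresponding pointwise expression. -/
theorem symmetrization_regular_product (Ω : Set Octo) (hΩ : SymSliceDomain Ω)
    (f g p fs gs ps : Octo → Octo)
    (hf : SliceRegular Ω f) (hg : SliceRegular Ω g) (hp : SliceRegular Ω p)
    (hfs : SliceRegular Ω fs) (hgs : SliceRegular Ω gs) (hps : SliceRegular Ω ps)
    (hf0 : ¬ ∀ z ∈ Ω, f z = 0) (hg0 : ¬ ∀ z ∈ Ω, g z = 0)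
    (hprod : ∀ x : ℝ, emb x ∈ Ω → p (emb x) = mul' (f (emb x)) (g (emb x)))
    (hfs0 : ∀ x : ℝ, emb x ∈ Ω → fs (emb x) = mul' (f (emb x)) (conj' (f (emb x))))
    (hgs0 : ∀ x : ℝ, emb x ∈ Ω → gs (emb x) = mul' (g (emb x)) (conj' (g (emb x))))
    (hps0 : ∀ x : ℝ, emb x ∈ Ω → ps (emb x) = mul' (p (emb x)) (conj' (p (emb x)))) :
    ∀ w ∈ Ω, ps w = mul' (fs w) (gs w) ∧ mul' (fs w) (gs w) = mul' (gs w) (fs w) := by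
  intro w hw
  classical
  obtain ⟨I, hI, q, hwq⟩ : ∃ I, IsImUnit I ∧ ∃ q : ℝ × ℝ, w = pt I q := by
    by_cases him : im' w = 0
    · refine ⟨I0, isImUnit_I0, (re' w, 0), ?_⟩
      rw [pt_real]
      have := emb_add_im' w
      rw [him, add_zero] at this
      exact this.symm
    · have hN : 0 < inner' (im' w) (im' w) := inner'_self_pos him
      have hs : Real.sqrt (inner' (im' w) (im' w)) ≠ 0 := by positivity
      refine ⟨(Real.sqrt (inner' (im' w) (im' w)))⁻¹ • im' w,
        isImUnit_normalize (im'_re w) him,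
        (re' w, Real.sqrt (inner' (im' w) (im' w))), ?_⟩
      rw [pt, smul_smul, mul_inv_cancel₀ hs, one_smul, emb_add_im']
  set z : ℂ := Complex.mk q.1 q.2 with hzdef
  have hq : (z.re, z.im) = q := Prod.ext rfl rfl
  have hw' : w = pt I (z.re, z.im) := by rw [hq]; exact hwq
  have hz : pt I (z.re, z.im) ∈ Ω := by rw [← hw']; exact hw
  -- realness of the symmetrized functions on the reals
  have hfsreal : ∀ x : ℝ, emb x ∈ Ω → ∃ r : ℝ, fs (emb x) = emb r := fun x hx =>
    ⟨inner' (f (emb x)) (f (emb x)), by rw [hfs0 x hx, mul'_conj'_self]⟩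
  have hgsreal : ∀ x : ℝ, emb x ∈ Ω → ∃ r : ℝ, gs (emb x) = emb r := fun x hx =>
    ⟨inner' (g (emb x)) (g (emb x)), by rw [hgs0 x hx, mul'_conj'_self]⟩
  have hpsreal : ∀ x : ℝ, emb x ∈ Ω → ∃ r : ℝ, ps (emb x) = emb r := fun x hx =>
    ⟨inner' (p (emb x)) (p (emb x)), by rw [hps0 x hx, mul'_conj'_self]⟩
  -- slice preservation
  have Hfs := slicePres hΩ hI hfs hfsreal hz
  have Hgs := slicePres hΩ hI hgs hgsreal hz
  have Hps := slicePres hΩ hI hps hpsreal hz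
  -- the key analytic identity
  have hψ : Tfun one' I (ps (pt I (z.re, z.im)))
      - Tfun one' I (fs (pt I (z.re, z.im))) * Tfun one' I (gs (pt I (z.re, z.im))) = 0 := by
    apply core hΩ hI (fun v => Tfun one' I (ps (pt I (v.re, v.im)))
      - Tfun one' I (fs (pt I (v.re, v.im))) * Tfun one' I (gs (pt I (v.re, v.im))))
      (fun v hv => ((holo hps hI one' hv).sub
        ((holo hfs hI one' hv).mul (holo hgs hI one' hv)))) ?_ hz
    intro x hx
    have hpt : pt I ((x:ℂ).re, (x:ℂ).im) = emb x := by
      simp only [Complex.ofReal_re, Complex.ofReal_im]; exact pt_real I x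
    show Tfun one' I (ps (pt I ((x:ℂ).re, (x:ℂ).im)))
      - Tfun one' I (fs (pt I ((x:ℂ).re, (x:ℂ).im)))
        * Tfun one' I (gs (pt I ((x:ℂ).re, (x:ℂ).im))) = 0
    rw [hpt]
    have hfsv : fs (emb x) = emb (inner' (f (emb x)) (f (emb x))) := by
      rw [hfs0 x hx, mul'_conj'_self]
    have hgsv : gs (emb x) = emb (inner' (g (emb x)) (g (emb x))) := by
      rw [hgs0 x hx, mul'_conj'_self]
    have hpsv : ps (emb x) = emb (inner' (f (emb x)) (f (emb x))
        * inner' (g (emb x)) (g (emb x))) := by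
      rw [hps0 x hx, mul'_conj'_self, hprod x hx, normMul]
    rw [hfsv, hgsv, hpsv, Tfun_emb hI, Tfun_emb hI, Tfun_emb hI]
    push_cast
    ring
  set af := inner' one' (fs (pt I (z.re, z.im))) with haf
  set bf := inner' I (fs (pt I (z.re, z.im))) with hbf
  set ag := inner' one' (gs (pt I (z.re, z.im))) with hag
  set bg := inner' I (gs (pt I (z.re, z.im))) with hbg
  set ap := inner' one' (ps (pt I (z.re, z.im))) with hap
  set bp := inner' I (ps (pt I (z.re, z.im))) with hbp
  rw [Hfs, Hgs, Hps] at hψ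
  rw [Tfun_pt hI, Tfun_pt hI, Tfun_pt hI] at hψ
  have hψ' : Complex.mk ap bp = Complex.mk af bf * Complex.mk ag bg := by
    linear_combination hψ
  have hre : ap = af * ag - bf * bg := by
    have h2 := congrArg Complex.re hψ'
    rwa [Complex.mul_re] at h2
  have him : bp = af * bg + bf * ag := by
    have h2 := congrArg Complex.im hψ'
    rwa [Complex.mul_im] at h2
  constructor
  · rw [hw', Hps, Hfs, Hgs, mul'_pt_pt hI, hre, him]
  · rw [hw', Hfs, Hgs]
    exact mul'_comm_pt hI af bf ag bg
end
end
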